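/- Let (X_i)_{i≥0} and (R_i)_{i≥0} be ℕ-valued random variables on a probability space (Ω,P) with X_i ≤ R_i almost surely for each i, and suppose there exists c > 0 such that for every n, k ∈ ℕ: (a) P( X_n ≥ k | σ(X_0,…,X_{n−1}) ) ≤ e^{−ck} almost surely; (b) P( X_n ∈ {0,1} | σ(X_0,…,X_{n−1}) ) ≥ c almost surely; and (c) P( R_n ≥ k | σ(R_0,…,R_{n−1}) ) ≤ e^{−ck} almost surely. Define D_n = {n+1, …, n+X_n−1} if X_n ≥ 2 and D_n = ∅ otherwise, D = ⋃_{n≥0} D_n, Y = inf{ i ≥ 1 : i ∉ D }, and Z = Σ_{i=0}^{Y−1} R_i. Then there exists ĉ > 0, determined by c alone, such that P( Z ≥ k ) ≤ e^{−ĉ k} for every k ∈ ℕ. -/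

import Mathlib

open Real

set_option linter.unusedSectionVars false
set_option linter.unusedVariables false

namespace Geo

lemma exp_neg_le_inv (x : ℝ) (hx : 0 ≤ x) : Real.exp (-x) ≤ 1/(1+x) := by
  have h := Real.add_one_le_exp x
  have h3 : (0:ℝ) < Real.exp x := Real.exp_pos _
  rw [Real.exp_neg]
  rw [inv_le_comm₀ h3 (by positivity), one_div, inv_inv]
  linarith

noncomputable def aa (c : ℝ) : ℝ := c/8
noncomputable def bb (c : ℝ) : ℝ := Real.exp (c/2)
noncomputable def hh (c : ℝ) : ℕ := ⌈Real.log (84/c^2)/c⌉₊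
noncomputable def et (c : ℝ) : ℝ := (c^2/21) * (aa c)^(hh c)
noncomputable def rr (c : ℝ) : ℝ := 1 + c^2 * et c / 24
noncomputable def gg (c : ℝ) (k : ℕ) : ℝ := (aa c)^k + et c * (bb c)^k
noncomputable def FF (c : ℝ) (v : ℕ) : ℝ := ∑ k ∈ Finset.range v, gg c (k+1)
noncomputable def SSt (c : ℝ) (v : ℕ) : ℝ := ∑' k : ℕ, gg c (k+v+1) * Real.exp (-(c*(k+v+2)))

variable {c : ℝ} (hc : 0 < c) (hc2 : c ≤ 1/2)
section
include hc hc2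

lemma aa_pos : 0 < aa c := by unfold aa; linarith
lemma aa_le : aa c ≤ 1/16 := by unfold aa; linarith
lemma bb_one : 1 < bb c := by
  unfold bb; rw [show (1:ℝ) = Real.exp 0 by simp]; exact Real.exp_lt_exp.2 (by linarith)
lemma bb_le : bb c ≤ 4/3 := by
  unfold bb
  have h1 : 1 - c/2 ≤ Real.exp (-(c/2)) := by
    have := Real.add_one_le_exp (-(c/2)); linarith
  have h2 : Real.exp (c/2) * Real.exp (-(c/2)) = 1 := by rw [← Real.exp_add]; simp
  have h3 : (0:ℝ) < Real.exp (c/2) := Real.exp_pos _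
  nlinarith
lemma et_pos : 0 < et c := by
  unfold et
  have := aa_pos hc hc2
  positivity
lemma et_le : et c ≤ 1 := by
  unfold et
  have h1 : (aa c)^(hh c) ≤ 1 := pow_le_one₀ (le_of_lt (aa_pos hc hc2)) (by linarith [aa_le hc hc2])
  have h2 : c^2/21 ≤ 1 := by nlinarith
  have h3 : (0:ℝ) ≤ (aa c)^(hh c) := pow_nonneg (le_of_lt (aa_pos hc hc2)) _
  nlinarith
lemma rr_one : 1 < rr c := by
  unfold rr
  have h1 : 0 < c^2 * et c / 24 := by have := et_pos hc hc2; positivity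
  linarith
lemma rr_le : rr c ≤ 9/8 := by
  unfold rr
  have h1 := et_le hc hc2
  have h2 := et_pos hc hc2
  nlinarith
lemma rr_le' : rr c ≤ 1 + c^2/24 := by
  unfold rr
  have h1 := et_le hc hc2
  have h2 := et_pos hc hc2
  nlinarith
lemma gg_pos (k : ℕ) : 0 < gg c k := by
  unfold gg
  have := aa_pos hc hc2; have := et_pos hc hc2; have h := bb_one hc hc2
  have : (0:ℝ) < bb c := by linarith
  positivity
lemma FF_nonneg (v : ℕ) : 0 ≤ FF c v :=
  Finset.sum_nonneg fun k _ => le_of_lt (gg_pos hc hc2 _)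

lemma one_sub_exp_half : 3*c/8 ≤ 1 - Real.exp (-(c/2)) := by
  have h1 := exp_neg_le_inv (c/2) (by linarith)
  have h4 : (0:ℝ) < 1 + c/2 := by linarith
  have h5 : 1/(1+c/2) ≤ 1 - 3*c/8 := by rw [div_le_iff₀ h4]; nlinarith
  linarith

-- exp(c * hh) ≥ 84/c^2
lemma exp_hh : 84/c^2 ≤ Real.exp (c * hh c) := by
  have h0 : (0:ℝ) < 84/c^2 := by positivity
  have h1 : Real.log (84/c^2)/c ≤ (hh c : ℝ) := Nat.le_ceil _
  have h2 : Real.log (84/c^2) ≤ c * hh c := by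
    rw [div_le_iff₀ hc] at h1; linarith
  calc 84/c^2 = Real.exp (Real.log (84/c^2)) := (Real.exp_log h0).symm
    _ ≤ Real.exp (c * hh c) := Real.exp_le_exp.2 h2

end
end Geo

-- Part 2 : series bounds
namespace Geo
section
variable {c : ℝ} (hc : 0 < c) (hc2 : c ≤ 1/2)
include hc hc2

lemma Exp_pow (x : ℝ) (n : ℕ) : (Real.exp x)^n = Real.exp (n * x) := by
  rw [← Real.exp_nat_mul]

lemma summable_Sa (v : ℕ) :
    Summable (fun k : ℕ => (aa c)^(k+v+1) * Real.exp (-(c*(k+v+2)))) := by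
  have ha := aa_pos hc hc2; have ha2 := aa_le hc hc2
  have hle : ∀ k : ℕ, (aa c)^(k+v+1) * Real.exp (-(c*(k+v+2)))
      ≤ (aa c)^(v+1) * (aa c)^k := by
    intro k
    have h1 : Real.exp (-(c*(k+v+2))) ≤ 1 := by
      apply Real.exp_le_one_iff.2
      have hk : (0:ℝ) ≤ (k:ℝ) := Nat.cast_nonneg k
      have hv : (0:ℝ) ≤ (v:ℝ) := Nat.cast_nonneg v
      nlinarith
    have h2 : (aa c)^(k+v+1) = (aa c)^(v+1) * (aa c)^k := by rw [show k+v+1 = (v+1)+k by omega, pow_add]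
    rw [h2]
    exact mul_le_of_le_one_right (mul_nonneg (pow_nonneg ha.le _) (pow_nonneg ha.le _)) h1
  exact Summable.of_nonneg_of_le
    (fun k => mul_nonneg (pow_nonneg ha.le _) (Real.exp_pos _).le) hle
    ((summable_geometric_of_lt_one ha.le (by linarith)).mul_left _)

lemma Sb_key (v : ℕ) : ∀ k : ℕ, (bb c)^(k+v+1) * Real.exp (-(c*(k+v+2)))
    = Real.exp (-c) * (Real.exp (-(c/2)))^(v+1) * (Real.exp (-(c/2)))^k := by
  intro k
  unfold bb
  rw [Exp_pow hc hc2, Exp_pow hc hc2, Exp_pow hc hc2, ← Real.exp_add, ← Real.exp_add, ← Real.exp_add]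
  congr 1
  push_cast
  ring

lemma summable_Sb (v : ℕ) :
    Summable (fun k : ℕ => (bb c)^(k+v+1) * Real.exp (-(c*(k+v+2)))) := by
  have hEpos : (0:ℝ) < Real.exp (-(c/2)) := Real.exp_pos _
  have hElt : Real.exp (-(c/2)) < 1 := by rw [Real.exp_lt_one_iff]; linarith
  rw [funext (Sb_key hc hc2 v)]
  exact (summable_geometric_of_lt_one hEpos.le hElt).mul_left _

lemma Sa_le (v : ℕ) : (∑' k:ℕ, (aa c)^(k+v+1) * Real.exp (-(c*(k+v+2))))
    ≤ Real.exp (-(2*c)) * ((aa c)^(v+1) * (1 - aa c)⁻¹) := by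
  have ha := aa_pos hc hc2; have ha2 := aa_le hc hc2
  have hgeom : Summable (fun k : ℕ => (aa c)^k) := summable_geometric_of_lt_one ha.le (by linarith)
  have hle : ∀ k : ℕ, (aa c)^(k+v+1) * Real.exp (-(c*(k+v+2)))
      ≤ Real.exp (-(2*c)) * (aa c)^(v+1) * (aa c)^k := by
    intro k
    have h1 : Real.exp (-(c*(k+v+2))) ≤ Real.exp (-(2*c)) := by
      apply Real.exp_le_exp.2
      have hk : (0:ℝ) ≤ (k:ℝ) := Nat.cast_nonneg k
      have hv : (0:ℝ) ≤ (v:ℝ) := Nat.cast_nonneg v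
      nlinarith
    have h2 : (aa c)^(k+v+1) = (aa c)^(v+1) * (aa c)^k := by rw [show k+v+1 = (v+1)+k by omega, pow_add]
    rw [h2]
    have h3 : (0:ℝ) ≤ (aa c)^(v+1) * (aa c)^k :=
      mul_nonneg (pow_nonneg ha.le _) (pow_nonneg ha.le _)
    calc (aa c)^(v+1) * (aa c)^k * Real.exp (-(c*(k+v+2)))
        ≤ (aa c)^(v+1) * (aa c)^k * Real.exp (-(2*c)) := mul_le_mul_of_nonneg_left h1 h3
      _ = Real.exp (-(2*c)) * (aa c)^(v+1) * (aa c)^k := by ring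
  calc (∑' k:ℕ, (aa c)^(k+v+1) * Real.exp (-(c*(k+v+2))))
      ≤ ∑' k:ℕ, Real.exp (-(2*c)) * (aa c)^(v+1) * (aa c)^k :=
        Summable.tsum_le_tsum hle (summable_Sa hc hc2 v) (hgeom.mul_left _)
    _ = Real.exp (-(2*c)) * (aa c)^(v+1) * (1 - aa c)⁻¹ := by
        rw [tsum_mul_left, tsum_geometric_of_lt_one ha.le (by linarith)]
    _ = Real.exp (-(2*c)) * ((aa c)^(v+1) * (1 - aa c)⁻¹) := by ring

lemma Sb_le (v : ℕ) : (∑' k:ℕ, (bb c)^(k+v+1) * Real.exp (-(c*(k+v+2))))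
    ≤ (8/(3*c)) * (Real.exp (-(c/2)))^(v+1) := by
  have hEpos : (0:ℝ) < Real.exp (-(c/2)) := Real.exp_pos _
  have hElt : Real.exp (-(c/2)) < 1 := by rw [Real.exp_lt_one_iff]; linarith
  rw [funext (Sb_key hc hc2 v)]
  rw [tsum_mul_left, tsum_geometric_of_lt_one hEpos.le hElt]
  have h1 : Real.exp (-c) ≤ 1 := Real.exp_le_one_iff.2 (by linarith)
  have h5 : (0:ℝ) < 1 - Real.exp (-(c/2)) := by
    have h3 := one_sub_exp_half hc hc2; linarith
  have h2 : (1 - Real.exp (-(c/2)))⁻¹ ≤ 8/(3*c) := by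
    have h3 := one_sub_exp_half hc hc2
    rw [inv_le_comm₀ h5 (by positivity), inv_div]
    linarith
  have h6 : (0:ℝ) ≤ (Real.exp (-(c/2)))^(v+1) := by positivity
  calc Real.exp (-c) * (Real.exp (-(c/2)))^(v+1) * (1-Real.exp (-(c/2)))⁻¹
      ≤ (1 * (Real.exp (-(c/2)))^(v+1)) * (8/(3*c)) := by
        apply mul_le_mul (mul_le_mul h1 le_rfl h6 (by norm_num)) h2
          (inv_nonneg.2 h5.le) (by positivity)
    _ = (8/(3*c)) * (Real.exp (-(c/2)))^(v+1) := by ring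

lemma gg_split (v k : ℕ) : gg c (k+v+1) * Real.exp (-(c*(k+v+2)))
    = (aa c)^(k+v+1) * Real.exp (-(c*(k+v+2)))
      + et c * ((bb c)^(k+v+1) * Real.exp (-(c*(k+v+2)))) := by
  unfold gg; ring

lemma summable_SSt (v : ℕ) :
    Summable (fun k : ℕ => gg c (k+v+1) * Real.exp (-(c*(k+v+2)))) := by
  rw [funext (gg_split hc hc2 v)]
  exact (summable_Sa hc hc2 v).add ((summable_Sb hc hc2 v).mul_left _)

lemma SSt_le (v : ℕ) : SSt c v
    ≤ Real.exp (-(2*c)) * ((aa c)^(v+1) * (1 - aa c)⁻¹)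
      + et c * ((8/(3*c)) * (Real.exp (-(c/2)))^(v+1)) := by
  unfold SSt
  rw [tsum_congr (gg_split hc hc2 v)]
  rw [Summable.tsum_add (summable_Sa hc hc2 v) ((summable_Sb hc hc2 v).mul_left _)]
  rw [tsum_mul_left]
  exact add_le_add (Sa_le hc hc2 v)
    (mul_le_mul_of_nonneg_left (Sb_le hc hc2 v) (et_pos hc hc2).le)

end
end Geo
-- Part 3 : the contraction inequality
namespace Geo
section
variable {c : ℝ} (hc : 0 < c) (hc2 : c ≤ 1/2)
include hc hc2

lemma D1 (v : ℕ) : rr c * (Real.exp (-(2*c)) * ((aa c)^(v+1) * (1 - aa c)⁻¹))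
    ≤ (1 - c/3) * (aa c)^(v+1) := by
  have ha := aa_pos hc hc2; have ha2 := aa_le hc hc2
  have hr1 := rr_one hc hc2; have hr2 := rr_le' hc hc2
  have he : Real.exp (-(2*c)) ≤ 1/(1+2*c) := by
    have := exp_neg_le_inv (2*c) (by linarith)
    simpa using this
  have hpow : (0:ℝ) < (aa c)^(v+1) := pow_pos ha _
  have haval : aa c = c/8 := rfl
  have hinvpos : (0:ℝ) < 1 - aa c := by rw [haval]; linarith
  have key : rr c * Real.exp (-(2*c)) * (1 - aa c)⁻¹ ≤ 1 - c/3 := by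
    rw [show rr c * Real.exp (-(2*c)) * (1 - aa c)⁻¹ = rr c * Real.exp (-(2*c)) / (1 - aa c) by ring]
    rw [div_le_iff₀ hinvpos]
    have step : rr c * Real.exp (-(2*c)) ≤ (1 + c^2/24) * (1/(1+2*c)) :=
      mul_le_mul hr2 he (Real.exp_pos _).le (by positivity)
    have step2 : (1 + c^2/24) * (1/(1+2*c)) ≤ (1 - c/3) * (1 - aa c) := by
      rw [haval, mul_one_div, div_le_iff₀ (by linarith : (0:ℝ) < 1+2*c)]
      nlinarith
    linarith
  calc rr c * (Real.exp (-(2*c)) * ((aa c)^(v+1) * (1 - aa c)⁻¹))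
      = (rr c * Real.exp (-(2*c)) * (1 - aa c)⁻¹) * (aa c)^(v+1) := by ring
    _ ≤ (1 - c/3) * (aa c)^(v+1) := mul_le_mul_of_nonneg_right key hpow.le

lemma D2 (v : ℕ) : rr c * (et c * ((8/(3*c)) * (Real.exp (-(c/2)))^(v+1)))
    ≤ (c/3) * ((aa c)^(v+1) + et c * (bb c)^(v+1)) := by
  have ha := aa_pos hc hc2; have ha2 := aa_le hc hc2
  have hr1 := rr_one hc hc2; have hr2 := rr_le hc hc2
  have hetp := et_pos hc hc2; have hetl := et_le hc hc2
  have hE : (0:ℝ) < Real.exp (-(c/2)) := Real.exp_pos _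
  have hEpow : (0:ℝ) < (Real.exp (-(c/2)))^(v+1) := pow_pos hE _
  rcases le_or_gt (hh c) (v+1) with hcase | hcase
  · -- high case : use the b-part
    have h1 : Real.exp (c * hh c) ≤ Real.exp (c * (v+1)) := by
      apply Real.exp_le_exp.2
      have : (hh c : ℝ) ≤ (v:ℝ)+1 := by exact_mod_cast hcase
      nlinarith
    have h2 : 84/c^2 ≤ Real.exp (c*(v+1)) := le_trans (exp_hh hc hc2) h1
    have h3 : (bb c)^(v+1) = Real.exp (c*(v+1)) * (Real.exp (-(c/2)))^(v+1) := by
      unfold bb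
      rw [Exp_pow hc hc2, Exp_pow hc hc2, ← Real.exp_add]
      congr 1; push_cast; ring
    have h4 : rr c * (et c * ((8/(3*c)) * (Real.exp (-(c/2)))^(v+1)))
        ≤ (c/3) * (et c * (bb c)^(v+1)) := by
      rw [h3]
      have expand : (c/3) * (et c * (Real.exp (c*(v+1)) * (Real.exp (-(c/2)))^(v+1)))
          = ((c/3) * Real.exp (c*(v+1))) * (et c * (Real.exp (-(c/2)))^(v+1)) := by ring
      have expand2 : rr c * (et c * ((8/(3*c)) * (Real.exp (-(c/2)))^(v+1)))
          = (rr c * (8/(3*c))) * (et c * (Real.exp (-(c/2)))^(v+1)) := by ring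
      rw [expand, expand2]
      apply mul_le_mul_of_nonneg_right _ (by positivity)
      have h5 : rr c * (8/(3*c)) ≤ (9/8) * (8/(3*c)) := by
        apply mul_le_mul_of_nonneg_right hr2 (by positivity)
      have h6 : (c/3) * (84/c^2) ≤ (c/3) * Real.exp (c*(v+1)) :=
        mul_le_mul_of_nonneg_left h2 (by positivity)
      have h7 : (9/8) * (8/(3*c)) ≤ (c/3) * (84/c^2) := by
        have e1 : (9:ℝ)/8 * (8/(3*c)) = 3/c := by field_simp; ring
        have e2 : (c/3) * (84/c^2) = 28/c := by field_simp; ring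
        rw [e1, e2]
        gcongr
        norm_num
      linarith
    have h8 : (0:ℝ) ≤ (c/3) * (aa c)^(v+1) := by positivity
    linarith [mul_le_mul_of_nonneg_left (le_refl ((aa c)^(v+1))) (by positivity : (0:ℝ) ≤ c/3)]
  · -- low case : use the a-part
    have hle : et c ≤ (c^2/21) * (aa c)^(v+1) := by
      unfold et
      apply mul_le_mul_of_nonneg_left _ (by positivity)
      exact pow_le_pow_of_le_one ha.le (by linarith) (by omega)
    have hEle : (Real.exp (-(c/2)))^(v+1) ≤ 1 :=
      pow_le_one₀ hE.le (Real.exp_le_one_iff.2 (by linarith))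
    have h4 : rr c * (et c * ((8/(3*c)) * (Real.exp (-(c/2)))^(v+1)))
        ≤ (9/8) * (((c^2/21) * (aa c)^(v+1)) * ((8/(3*c)) * 1)) := by
      apply mul_le_mul hr2
      · apply mul_le_mul hle
        · exact mul_le_mul_of_nonneg_left hEle (by positivity)
        · positivity
        · positivity
      · positivity
      · norm_num
    have h5 : (9/8) * (((c^2/21) * (aa c)^(v+1)) * ((8/(3*c)) * 1)) = (c/7) * (aa c)^(v+1) := by
      field_simp
      ring
    have h6 : (c/7) * (aa c)^(v+1) ≤ (c/3) * (aa c)^(v+1) := by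
      apply mul_le_mul_of_nonneg_right _ (pow_nonneg ha.le _)
      linarith
    have h7 : (0:ℝ) ≤ (c/3) * (et c * (bb c)^(v+1)) := by
      have := bb_one hc hc2
      have : (0:ℝ) < bb c := by linarith
      positivity
    nlinarith

lemma FF_le (v : ℕ) : FF c v ≤ 1/8 + et c * ((2/c) * (bb c)^(v+1)) := by
  have ha := aa_pos hc hc2; have ha2 := aa_le hc hc2
  have hb1 := bb_one hc hc2
  have hetp := et_pos hc hc2
  have hsplit : FF c v = (∑ k ∈ Finset.range v, (aa c)^(k+1))
      + et c * (∑ k ∈ Finset.range v, (bb c)^(k+1)) := by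
    unfold FF gg
    rw [Finset.mul_sum, ← Finset.sum_add_distrib]
  rw [hsplit]
  have hFa : (∑ k ∈ Finset.range v, (aa c)^(k+1)) ≤ 1/8 := by
    have h1 : (∑ k ∈ Finset.range v, (aa c)^(k+1)) = aa c * ∑ k ∈ Finset.range v, (aa c)^k := by
      rw [Finset.mul_sum]
      apply Finset.sum_congr rfl
      intro k _
      rw [pow_succ]; ring
    rw [h1]
    have h2 : (∑ k ∈ Finset.range v, (aa c)^k) ≤ (1 - aa c)⁻¹ := by
      have := Summable.sum_le_tsum (Finset.range v) (fun k _ => pow_nonneg ha.le k)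
        (summable_geometric_of_lt_one ha.le (by linarith))
      rw [tsum_geometric_of_lt_one ha.le (by linarith)] at this
      exact this
    have h3 : (1 - aa c)⁻¹ ≤ 16/15 := by
      rw [inv_le_comm₀ (by linarith) (by norm_num)]; norm_num; linarith
    have h4 : (0:ℝ) ≤ ∑ k ∈ Finset.range v, (aa c)^k :=
      Finset.sum_nonneg fun k _ => pow_nonneg ha.le k
    nlinarith
  have hFb : (∑ k ∈ Finset.range v, (bb c)^(k+1)) ≤ (2/c) * (bb c)^(v+1) := by
    have hgeo : (∑ k ∈ Finset.range v, (bb c)^k) = ((bb c)^v - 1)/(bb c - 1) :=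
      geom_sum_eq (by linarith) v
    have h1 : (∑ k ∈ Finset.range v, (bb c)^(k+1)) = bb c * (((bb c)^v - 1)/(bb c - 1)) := by
      rw [← hgeo, Finset.mul_sum]
      apply Finset.sum_congr rfl
      intro k _
      rw [pow_succ]; ring
    rw [h1]
    have hbc : c/2 ≤ bb c - 1 := by
      unfold bb
      have := Real.add_one_le_exp (c/2); linarith
    have hbpos : (0:ℝ) < bb c := by linarith
    have hpv : (0:ℝ) < (bb c)^v := pow_pos hbpos v
    have h2 : bb c * (((bb c)^v - 1)/(bb c - 1)) ≤ bb c * ((bb c)^v / (c/2)) := by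
      apply mul_le_mul_of_nonneg_left _ hbpos.le
      apply div_le_div₀ (by positivity) (by linarith) (by linarith) hbc
    have h3 : bb c * ((bb c)^v / (c/2)) = (2/c) * (bb c)^(v+1) := by
      rw [pow_succ]
      field_simp
    linarith
  have h5 : et c * (∑ k ∈ Finset.range v, (bb c)^(k+1)) ≤ et c * ((2/c) * (bb c)^(v+1)) :=
    mul_le_mul_of_nonneg_left hFb hetp.le
  linarith

lemma D3 (v : ℕ) : (rr c - 1) * FF c v ≤ (c/3) * (et c * (bb c)^(v+1)) := by
  have hb1 := bb_one hc hc2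
  have hetp := et_pos hc hc2; have hetl := et_le hc hc2
  have hbpos : (0:ℝ) < bb c := by linarith
  have hbv : (1:ℝ) ≤ (bb c)^(v+1) := one_le_pow₀ hb1.le
  have hrr : rr c - 1 = c^2 * et c / 24 := by unfold rr; ring
  have hFF := FF_le hc hc2 v
  have hFFnn := FF_nonneg hc hc2 v
  rw [hrr]
  have key : (c^2 * et c / 24) * (1/8 + et c * ((2/c) * (bb c)^(v+1)))
      ≤ (c/3) * (et c * (bb c)^(v+1)) := by
    have h1 : (c^2 * et c / 24) * (1/8) ≤ (c/6) * (et c * (bb c)^(v+1)) := by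
      have : (c^2 * et c / 24) * (1/8) = (c/6) * (et c * (c/32)) := by ring
      rw [this]
      apply mul_le_mul_of_nonneg_left _ (by positivity)
      apply mul_le_mul_of_nonneg_left _ hetp.le
      linarith
    have h2 : (c^2 * et c / 24) * (et c * ((2/c) * (bb c)^(v+1)))
        ≤ (c/12) * (et c * (bb c)^(v+1)) := by
      have heq : (c^2 * et c / 24) * (et c * ((2/c) * (bb c)^(v+1)))
          = (c/12) * (et c * (bb c)^(v+1)) * et c := by
        field_simp
        ring
      rw [heq]
      have h3 : (0:ℝ) ≤ (c/12) * (et c * (bb c)^(v+1)) := by positivity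
      nlinarith
    nlinarith
  have h4 : (0:ℝ) ≤ c^2 * et c / 24 := by positivity
  nlinarith

lemma gg_val (v : ℕ) : gg c (v+1) = (aa c)^(v+1) + et c * (bb c)^(v+1) := rfl

lemma star (v : ℕ) : rr c * (FF c v + SSt c v) ≤ FF c (v+1) := by
  have hS := SSt_le hc hc2 v
  have hr1 := rr_one hc hc2
  have hFF : FF c (v+1) = FF c v + gg c (v+1) := Finset.sum_range_succ _ _
  have hrS : rr c * SSt c v ≤ rr c * (Real.exp (-(2*c)) * ((aa c)^(v+1) * (1 - aa c)⁻¹))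
      + rr c * (et c * ((8/(3*c)) * (Real.exp (-(c/2)))^(v+1))) := by
    have := mul_le_mul_of_nonneg_left hS (by linarith : (0:ℝ) ≤ rr c)
    linarith [this]
  have h1 := D1 hc hc2 v
  have h2 := D2 hc hc2 v
  have h3 := D3 hc hc2 v
  have ha := aa_pos hc hc2
  have hpow : (0:ℝ) < (aa c)^(v+1) := pow_pos ha _
  have hbpos : (0:ℝ) < bb c := lt_trans one_pos (bb_one hc hc2)
  have hbb : (0:ℝ) < et c * (bb c)^(v+1) := mul_pos (et_pos hc hc2) (pow_pos hbpos _)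
  have e1 : rr c * (FF c v + SSt c v) = (FF c v + (rr c - 1) * FF c v) + rr c * SSt c v := by
    ring
  have hfin : (0:ℝ) ≤ (1 - 2*c/3) * (et c * (bb c)^(v+1)) := mul_nonneg (by linarith) hbb.le
  rw [hFF, gg_val hc hc2, e1]
  nlinarith [hrS, h1, h2, h3, hfin]

lemma base_le : SSt c 0 ≤ 1 + 3 * et c / c := by
  have hS := SSt_le hc hc2 0
  have ha := aa_pos hc hc2; have ha2 := aa_le hc hc2
  have hetp := et_pos hc hc2
  have h1 : Real.exp (-(2*c)) * ((aa c)^(0+1) * (1 - aa c)⁻¹) ≤ 1 := by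
    have he : Real.exp (-(2*c)) ≤ 1 := Real.exp_le_one_iff.2 (by linarith)
    have hinv : (1 - aa c)⁻¹ ≤ 16/15 := by
      rw [inv_le_comm₀ (by linarith) (by norm_num)]; norm_num; linarith
    have hinvpos : (0:ℝ) < (1 - aa c)⁻¹ := inv_pos.2 (by linarith)
    have hthis : (aa c)^(0+1) = aa c := pow_one _
    rw [hthis]
    have h7 : aa c * (1 - aa c)⁻¹ ≤ (1/16) * (16/15) :=
      mul_le_mul ha2 hinv hinvpos.le (by norm_num)
    have h8 : (0:ℝ) ≤ aa c * (1 - aa c)⁻¹ := mul_nonneg ha.le hinvpos.le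
    nlinarith [Real.exp_pos (-(2*c))]
  have h2 : et c * ((8/(3*c)) * (Real.exp (-(c/2)))^(0+1)) ≤ 3 * et c / c := by
    have hE : (Real.exp (-(c/2)))^(0+1) ≤ 1 := by
      rw [pow_one]
      exact Real.exp_le_one_iff.2 (by linarith)
    have hEpos : (0:ℝ) < (Real.exp (-(c/2)))^(0+1) := pow_pos (Real.exp_pos _) _
    have h3 : (8/(3*c)) * (Real.exp (-(c/2)))^(0+1) ≤ 8/(3*c) :=
      mul_le_of_le_one_right (by positivity) hE
    have h4 : et c * ((8/(3*c)) * (Real.exp (-(c/2)))^(0+1)) ≤ et c * (8/(3*c)) :=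
      mul_le_mul_of_nonneg_left h3 hetp.le
    have h5 : et c * (8/(3*c)) ≤ et c * (3/c) := by
      apply mul_le_mul_of_nonneg_left _ hetp.le
      rw [div_le_div_iff₀ (by linarith) (by linarith)]
      nlinarith
    have h6 : et c * (3/c) = 3 * et c / c := by ring
    linarith
  linarith

end
end Geo
-- Part 4 : part B real series
namespace Geo
noncomputable def GB (c : ℝ) : ℝ := ∑' u:ℕ, ((bb c)^(u+1) - (bb c)^u) * Real.exp (-(c*(u+1)))

section
variable {c : ℝ} (hc : 0 < c) (hc2 : c ≤ 1/2)
include hc hc2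

lemma GB_key : ∀ u : ℕ, ((bb c)^(u+1) - (bb c)^u) * Real.exp (-(c*(u+1)))
    = ((bb c - 1) * Real.exp (-c)) * (Real.exp (-(c/2)))^u := by
  intro u
  have e1 : (bb c)^(u+1) * Real.exp (-(c*(u+1))) = bb c * Real.exp (-c) * (Real.exp (-(c/2)))^u := by
    unfold bb
    rw [Exp_pow hc hc2, Exp_pow hc hc2, ← Real.exp_add, ← Real.exp_add, ← Real.exp_add]
    congr 1; push_cast; ring
  have e2 : (bb c)^u * Real.exp (-(c*(u+1))) = Real.exp (-c) * (Real.exp (-(c/2)))^u := by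
    unfold bb
    rw [Exp_pow hc hc2, Exp_pow hc hc2, ← Real.exp_add, ← Real.exp_add]
    congr 1; push_cast; ring
  calc ((bb c)^(u+1) - (bb c)^u) * Real.exp (-(c*(u+1)))
      = (bb c)^(u+1) * Real.exp (-(c*(u+1))) - (bb c)^u * Real.exp (-(c*(u+1))) := by ring
    _ = bb c * Real.exp (-c) * (Real.exp (-(c/2)))^u - Real.exp (-c) * (Real.exp (-(c/2)))^u := by
        rw [e1, e2]
    _ = ((bb c - 1) * Real.exp (-c)) * (Real.exp (-(c/2)))^u := by ring

lemma summable_GB : Summable (fun u:ℕ => ((bb c)^(u+1) - (bb c)^u) * Real.exp (-(c*(u+1)))) := by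
  have hEpos : (0:ℝ) < Real.exp (-(c/2)) := Real.exp_pos _
  have hElt : Real.exp (-(c/2)) < 1 := by rw [Real.exp_lt_one_iff]; linarith
  rw [funext (GB_key hc hc2)]
  exact (summable_geometric_of_lt_one hEpos.le hElt).mul_left _

lemma GB_nonneg : 0 ≤ GB c := by
  unfold GB
  apply tsum_nonneg
  intro u
  rw [GB_key hc hc2 u]
  have hb := bb_one hc hc2
  exact mul_nonneg (mul_nonneg (by linarith) (Real.exp_pos _).le)
    (pow_nonneg (Real.exp_pos _).le _)

lemma GB_le : GB c ≤ 4/3 := by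
  unfold GB
  rw [tsum_congr (GB_key hc hc2)]
  have hEpos : (0:ℝ) < Real.exp (-(c/2)) := Real.exp_pos _
  have hElt : Real.exp (-(c/2)) < 1 := by rw [Real.exp_lt_one_iff]; linarith
  rw [tsum_mul_left, tsum_geometric_of_lt_one hEpos.le hElt]
  have key : (bb c - 1) = bb c * (1 - Real.exp (-(c/2))) := by
    unfold bb
    rw [mul_sub, mul_one, ← Real.exp_add]
    rw [show c/2 + -(c/2) = 0 by ring, Real.exp_zero]
  rw [key]
  have h0 : (0:ℝ) < 1 - Real.exp (-(c/2)) := by linarith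
  have e1 : bb c * (1 - Real.exp (-(c/2))) * Real.exp (-c) * (1 - Real.exp (-(c/2)))⁻¹
      = bb c * Real.exp (-c) := by
    rw [show bb c * (1 - Real.exp (-(c/2))) * Real.exp (-c) * (1 - Real.exp (-(c/2)))⁻¹
        = bb c * Real.exp (-c) * ((1 - Real.exp (-(c/2))) * (1 - Real.exp (-(c/2)))⁻¹) by ring,
      mul_inv_cancel₀ (ne_of_gt h0), mul_one]
  rw [e1]
  have e2 : bb c * Real.exp (-c) = Real.exp (-(c/2)) := by
    unfold bb
    rw [← Real.exp_add]
    congr 1; ring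
  rw [e2]
  linarith

end
end Geo
-- Part 5 : measurability infrastructure
namespace Geo
open MeasureTheory

variable {Ω : Type} [MeasurableSpace Ω]

lemma meas_pre {m : ℕ} (V : ℕ → Ω → ℕ) {M : MeasurableSpace Ω}
    (hM : ∀ i, i < m → MeasurableSpace.comap (V i) ⊤ ≤ M)
    (q : (ℕ → ℕ) → Prop)
    (hq : ∀ x y : ℕ → ℕ, (∀ i, i < m → x i = y i) → q x → q y) :
    MeasurableSet[M] {ω | q (fun i => V i ω)} := by
  classical
  let pp : Ω → (Fin m → ℕ) := fun ω j => V j ω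
  let T : Set (Fin m → ℕ) := {v | q (fun i => if h : i < m then v ⟨i, h⟩ else 0)}
  have hset : {ω | q (fun i => V i ω)} = pp ⁻¹' T := by
    ext ω
    simp only [Set.mem_setOf_eq, Set.mem_preimage, T, pp]
    constructor
    · intro hω
      apply hq _ _ _ hω
      intro i hi
      simp [hi]
    · intro hω
      apply hq _ _ _ hω
      intro i hi
      simp [hi]
  rw [hset]
  have hpp : @Measurable Ω (Fin m → ℕ) M _ pp := by
    apply measurable_pi_lambda
    intro j
    intro s _
    exact hM j j.isLt _ ⟨s, MeasurableSpace.measurableSet_top, rfl⟩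
  exact hpp ((Set.to_countable T).measurableSet)

lemma comap_le_ambient (V : Ω → ℕ) (hV : Measurable V) :
    MeasurableSpace.comap V ⊤ ≤ ‹MeasurableSpace Ω› := by
  rintro s ⟨t, -, rfl⟩
  exact hV ((Set.to_countable t).measurableSet)

lemma comap_le_J (V : ℕ → Ω → ℕ) {i n : ℕ} (hi : i < n) :
    MeasurableSpace.comap (V i) ⊤
      ≤ ⨆ j ∈ Finset.range n, MeasurableSpace.comap (V j) ⊤ :=
  le_iSup₂ (f := fun j (_ : j ∈ Finset.range n) => MeasurableSpace.comap (V j) ⊤)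
    i (Finset.mem_range.2 hi)

-- the reach process and events
def reach (X : ℕ → Ω → ℕ) (m : ℕ) (ω : Ω) : ℕ :=
  (Finset.range (m+1)).sup fun n => n + X n ω

def Tk (X : ℕ → Ω → ℕ) (m k : ℕ) : Set Ω := {ω | m+k+2 ≤ reach X m ω}

def Ev (X : ℕ → Ω → ℕ) (m : ℕ) : Set Ω := {ω | ∀ i, i < m → i+2 ≤ reach X i ω}

def Av (X : ℕ → Ω → ℕ) (m w : ℕ) : Set Ω := Ev X m ∩ {ω | reach X m ω = m+w+2}

lemma reach_succ (X : ℕ → Ω → ℕ) (m : ℕ) (ω : Ω) :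
    reach X (m+1) ω = max ((m+1) + X (m+1) ω) (reach X m ω) := by
  unfold reach
  rw [Finset.range_add_one, Finset.sup_insert]

lemma reach_zero (X : ℕ → Ω → ℕ) (ω : Ω) : reach X 0 ω = X 0 ω := by
  unfold reach
  simp

-- measurability of the events
lemma meas_reach_pred (X : ℕ → Ω → ℕ) {M : MeasurableSpace Ω}
    (hM : ∀ i, i ≤ m → MeasurableSpace.comap (X i) ⊤ ≤ M) (m : ℕ) : True := trivial

lemma reach_congr {x y : ℕ → ℕ} (m : ℕ)
    (h : ∀ i, i ≤ m → x i = y i) :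
    ((Finset.range (m+1)).sup fun n => n + x n) = ((Finset.range (m+1)).sup fun n => n + y n) := by
  apply Finset.sup_congr rfl
  intro n hn
  rw [h n (by simpa [Nat.lt_succ_iff] using hn)]

lemma meas_Av (X : ℕ → Ω → ℕ) (m w : ℕ) {M : MeasurableSpace Ω}
    (hM : ∀ i, i < m+1 → MeasurableSpace.comap (X i) ⊤ ≤ M) :
    MeasurableSet[M] (Av X m w) := by
  have : Av X m w = {ω | (fun x : ℕ → ℕ =>
      (∀ i, i < m → i+2 ≤ ((Finset.range (i+1)).sup fun n => n + x n))
        ∧ ((Finset.range (m+1)).sup fun n => n + x n) = m+w+2) (fun i => X i ω)} := by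
    ext ω
    simp only [Av, Ev, reach, Set.mem_inter_iff, Set.mem_setOf_eq]
  rw [this]
  exact meas_pre X hM (fun x : ℕ → ℕ =>
      (∀ i, i < m → i+2 ≤ ((Finset.range (i+1)).sup fun n => n + x n))
        ∧ ((Finset.range (m+1)).sup fun n => n + x n) = m+w+2) (by
    rintro x y hxy ⟨h1, h2⟩
    constructor
    · intro i hi
      rw [reach_congr i (fun j hj => (hxy j (by omega)).symm)]
      exact h1 i hi
    · rw [reach_congr m (fun j hj => (hxy j (by omega)).symm)]
      exact h2)

lemma meas_Ev (X : ℕ → Ω → ℕ) (m : ℕ) {M : MeasurableSpace Ω}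
    (hM : ∀ i, i < m → MeasurableSpace.comap (X i) ⊤ ≤ M) :
    MeasurableSet[M] (Ev X m) := by
  have : Ev X m = {ω | (fun x : ℕ → ℕ =>
      (∀ i, i < m → i+2 ≤ ((Finset.range (i+1)).sup fun n => n + x n))) (fun i => X i ω)} := by
    ext ω
    simp only [Ev, reach, Set.mem_setOf_eq]
  rw [this]
  exact meas_pre X hM (fun x : ℕ → ℕ =>
      (∀ i, i < m → i+2 ≤ ((Finset.range (i+1)).sup fun n => n + x n))) (by
    rintro x y hxy h1 i hi
    rw [reach_congr i (fun j hj => (hxy j (by omega)).symm)]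
    exact h1 i hi)

lemma meas_Tk (X : ℕ → Ω → ℕ) (m k : ℕ) {M : MeasurableSpace Ω}
    (hM : ∀ i, i < m+1 → MeasurableSpace.comap (X i) ⊤ ≤ M) :
    MeasurableSet[M] (Tk X m k) := by
  have : Tk X m k = {ω | (fun x : ℕ → ℕ =>
      (m+k+2 ≤ ((Finset.range (m+1)).sup fun n => n + x n))) (fun i => X i ω)} := by
    ext ω
    simp only [Tk, reach, Set.mem_setOf_eq]
  rw [this]
  exact meas_pre X hM (fun x : ℕ → ℕ =>
      (m+k+2 ≤ ((Finset.range (m+1)).sup fun n => n + x n))) (by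
    rintro x y hxy h1
    rw [reach_congr m (fun j hj => (hxy j (by omega)).symm)]
    exact h1)

end Geo
-- Part 6 : the tau coefficients
namespace Geo

noncomputable def tau (c : ℝ) (w k : ℕ) : ℝ :=
  if k+1 ≤ w then gg c (k+1) else gg c (k+1) * Real.exp (-(c*(k+2)))

section
variable {c : ℝ} (hc : 0 < c) (hc2 : c ≤ 1/2)
include hc hc2

lemma tau_nonneg (w k : ℕ) : 0 ≤ tau c w k := by
  unfold tau
  have := gg_pos hc hc2 (k+1)
  split
  · linarith
  · exact mul_nonneg (by linarith) (Real.exp_pos _).le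

lemma tau_shift (w : ℕ) : ∀ k : ℕ, tau c w (k+w) = gg c (k+w+1) * Real.exp (-(c*(k+w+2))) := by
  intro k
  unfold tau
  rw [if_neg (by omega)]
  congr 2
  push_cast
  ring

lemma tau_summable (w : ℕ) : Summable (tau c w) := by
  apply (summable_nat_add_iff w).1
  rw [funext (tau_shift hc hc2 w)]
  exact summable_SSt hc hc2 w

lemma tau_sum (w : ℕ) : ∑' k, tau c w k = FF c w + SSt c w := by
  rw [← Summable.sum_add_tsum_nat_add w (tau_summable hc hc2 w)]
  congr 1
  · unfold FF
    apply Finset.sum_congr rfl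
    intro i hi
    unfold tau
    rw [if_pos (by simp at hi; omega)]
  · rw [tsum_congr (tau_shift hc hc2 w)]
    rfl

lemma tau_le (w : ℕ) : ∑' k, tau c w k ≤ (1/rr c) * FF c (w+1) := by
  have hstar := star hc hc2 w
  have hrpos : (0:ℝ) < rr c := lt_trans one_pos (rr_one hc hc2)
  rw [tau_sum hc hc2 w]
  rw [one_div, ← div_eq_inv_mul, le_div_iff₀ hrpos]
  linarith [hstar]

end
end Geo
-- Part 7 : set identities
namespace Geo
open MeasureTheory

variable {Ω : Type} [MeasurableSpace Ω]

lemma EvUnion (X : ℕ → Ω → ℕ) (m : ℕ) : Ev X (m+1) = ⋃ w : ℕ, Av X m w := by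
  ext ω
  simp only [Ev, Av, Set.mem_iUnion, Set.mem_inter_iff, Set.mem_setOf_eq]
  constructor
  · intro h
    have hm := h m (by omega)
    refine ⟨reach X m ω - (m+2), fun i hi => h i (by omega), by omega⟩
  · rintro ⟨w, hEv, hval⟩ i hi
    rcases Nat.lt_succ_iff_lt_or_eq.1 hi with hi' | rfl
    · exact hEv i hi'
    · omega

lemma EvSucc (X : ℕ → Ω → ℕ) (m : ℕ) : Ev X (m+1) = Tk X m 0 ∩ Ev X m := by
  ext ω
  simp only [Ev, Tk, Set.mem_inter_iff, Set.mem_setOf_eq]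
  constructor
  · intro h
    exact ⟨by have := h m (by omega); omega, fun i hi => h i (by omega)⟩
  · rintro ⟨h0, h⟩ i hi
    rcases Nat.lt_succ_iff_lt_or_eq.1 hi with hi' | rfl
    · exact h i hi'
    · omega

lemma TkEvU (X : ℕ → Ω → ℕ) (m k : ℕ) :
    Tk X m k ∩ Ev X m = ⋃ w : ℕ, (if k ≤ w then Av X m w else ∅) := by
  ext ω
  simp only [Tk, Ev, Av, Set.mem_iUnion, Set.mem_inter_iff, Set.mem_setOf_eq]
  constructor
  · rintro ⟨hT, hE⟩
    refine ⟨reach X m ω - (m+2), ?_⟩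
    rw [if_pos (by omega)]
    exact ⟨hE, by simp only [Set.mem_setOf_eq]; omega⟩
  · rintro ⟨w, hw⟩
    by_cases h : k ≤ w
    · rw [if_pos h] at hw
      obtain ⟨hE, hval⟩ := hw
      simp only [Set.mem_setOf_eq] at hval
      exact ⟨by omega, hE⟩
    · rw [if_neg h] at hw
      exact absurd hw (Set.notMem_empty ω)

lemma TkSuccAv_true (X : ℕ → Ω → ℕ) (m k w : ℕ) (h : k+1 ≤ w) :
    Tk X (m+1) k ∩ Av X m w = Av X m w := by
  apply Set.inter_eq_self_of_subset_right
  rintro ω ⟨hE, hval⟩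
  simp only [Set.mem_setOf_eq] at hval
  simp only [Tk, Set.mem_setOf_eq]
  rw [reach_succ]
  simp only [le_max_iff]
  right
  omega

lemma TkSuccAv_false (X : ℕ → Ω → ℕ) (m k w : ℕ) (h : ¬ (k+1 ≤ w)) :
    Tk X (m+1) k ∩ Av X m w = {ω | k+2 ≤ X (m+1) ω} ∩ Av X m w := by
  ext ω
  simp only [Tk, Av, Ev, Set.mem_inter_iff, Set.mem_setOf_eq]
  constructor
  · rintro ⟨hT, hE, hval⟩
    rw [reach_succ] at hT
    simp only [le_max_iff] at hT
    refine ⟨?_, hE, hval⟩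
    rcases hT with h1 | h2
    · omega
    · omega
  · rintro ⟨hX, hE, hval⟩
    refine ⟨?_, hE, hval⟩
    rw [reach_succ]
    simp only [le_max_iff]
    left
    omega

lemma Av_disj (X : ℕ → Ω → ℕ) (m : ℕ) : Pairwise (Function.onFun Disjoint fun w => Av X m w) := by
  intro w1 w2 hne
  simp only [Function.onFun]
  rw [Set.disjoint_left]
  rintro ω ⟨-, h1⟩ ⟨-, h2⟩
  simp only [Set.mem_setOf_eq] at h1 h2
  omega

lemma Tk0Av (X : ℕ → Ω → ℕ) (m : ℕ) : Tk X 0 m = {ω | m+2 ≤ X 0 ω} := by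
  ext ω
  simp only [Tk, Set.mem_setOf_eq, reach_zero]
  omega

lemma Ev0 (X : ℕ → Ω → ℕ) : Ev X 0 = Set.univ := by
  ext ω
  simp [Ev]

end Geo
-- Part 8 : the Phi recursion
namespace Geo
open MeasureTheory

variable {Ω : Type} [MeasurableSpace Ω]

noncomputable def Phi (c : ℝ) (P : Measure Ω) (X : ℕ → Ω → ℕ) (m : ℕ) : ENNReal :=
  ∑' k : ℕ, ENNReal.ofReal (gg c (k+1)) * P (Tk X m k ∩ Ev X m)

section
variable {c : ℝ} (hc : 0 < c) (hc2 : c ≤ 1/2)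
variable (P : Measure Ω) (X : ℕ → Ω → ℕ)
variable (hXm : ∀ n, Measurable (X n))

-- ambient measurability helper
lemma amb (hXm' : ∀ n, Measurable (X n)) (n : ℕ) :
    ∀ i, i < n → MeasurableSpace.comap (X i) ⊤ ≤ ‹MeasurableSpace Ω› :=
  fun i _ => comap_le_ambient (X i) (hXm' i)

include hc hc2 hXm

lemma Phi_Av (m : ℕ) :
    Phi c P X m = ∑' w : ℕ, ENNReal.ofReal (FF c (w+1)) * P (Av X m w) := by
  have hAvMeas : ∀ w, MeasurableSet (Av X m w) :=
    fun w => meas_Av X m w (amb X hXm (m+1))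
  have step1 : ∀ k, P (Tk X m k ∩ Ev X m)
      = ∑' w : ℕ, (if k ≤ w then P (Av X m w) else 0) := by
    intro k
    rw [TkEvU X m k, measure_iUnion]
    · apply tsum_congr
      intro w
      by_cases h : k ≤ w
      · rw [if_pos h, if_pos h]
      · rw [if_neg h, if_neg h, measure_empty]
    · intro w1 w2 hne
      simp only [Function.onFun]
      by_cases h1 : k ≤ w1
      · by_cases h2 : k ≤ w2
        · rw [if_pos h1, if_pos h2]
          exact Av_disj X m hne
        · rw [if_neg h2]
          exact Set.disjoint_empty _
      · rw [if_neg h1]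
        exact Set.empty_disjoint _
    · intro w
      by_cases h : k ≤ w
      · rw [if_pos h]; exact hAvMeas w
      · rw [if_neg h]; exact MeasurableSet.empty
  unfold Phi
  rw [tsum_congr (fun k => by rw [step1 k, ENNReal.tsum_mul_left.symm])]
  rw [ENNReal.tsum_comm]
  apply tsum_congr
  intro w
  have inner : ∀ k : ℕ, ENNReal.ofReal (gg c (k+1)) * (if k ≤ w then P (Av X m w) else 0)
      = (if k ≤ w then ENNReal.ofReal (gg c (k+1)) * P (Av X m w) else 0) := by
    intro k
    by_cases h : k ≤ w
    · rw [if_pos h, if_pos h]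
    · rw [if_neg h, if_neg h, mul_zero]
  rw [tsum_congr inner]
  rw [tsum_eq_sum (s := Finset.range (w+1)) (by
    intro k hk
    rw [if_neg (by simp at hk; omega)])]
  rw [Finset.sum_congr rfl (fun k hk => by rw [if_pos (by simp at hk; omega)])]
  rw [← Finset.sum_mul]
  congr 1
  rw [← ENNReal.ofReal_sum_of_nonneg (fun i _ => (gg_pos hc hc2 (i+1)).le)]
  rfl

end
end Geo
-- small addendum : SSt at 0 in clean form
namespace Geo
section
variable {c : ℝ} (hc : 0 < c) (hc2 : c ≤ 1/2)
include hc hc2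
lemma SSt_zero : SSt c 0 = ∑' k : ℕ, gg c (k+1) * Real.exp (-(c*((k:ℝ)+2))) := by
  unfold SSt
  apply tsum_congr
  intro k
  norm_num
end
end Geo
-- Part 9 : Phi recursion bounds
namespace Geo
open MeasureTheory

variable {Ω : Type} [MeasurableSpace Ω]

section
variable {c : ℝ} (hc : 0 < c) (hc2 : c ≤ 1/2)
variable (P : Measure Ω) [IsProbabilityMeasure P] (X : ℕ → Ω → ℕ)
variable (hXm : ∀ n, Measurable (X n))
include hc hc2 hXm

lemma Phi_step
    (htail : ∀ n k : ℕ, ∀ A : Set Ω,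
      MeasurableSet[⨆ i ∈ Finset.range n, MeasurableSpace.comap (X i) ⊤] A →
      P ({ω | k ≤ X n ω} ∩ A) ≤ ENNReal.ofReal (Real.exp (-c * k)) * P A)
    (m : ℕ) :
    Phi c P X (m+1) ≤ ENNReal.ofReal (1/rr c) * Phi c P X m := by
  have hAvMeas : ∀ w, MeasurableSet (Av X m w) :=
    fun w => meas_Av X m w (amb X hXm (m+1))
  have hAvJ : ∀ w, MeasurableSet[⨆ i ∈ Finset.range (m+1), MeasurableSpace.comap (X i) ⊤]
      (Av X m w) := fun w => meas_Av X m w (fun i hi => comap_le_J X hi)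
  have hTkMeas : ∀ k, MeasurableSet (Tk X (m+1) k) :=
    fun k => meas_Tk X (m+1) k (amb X hXm (m+2))
  have hdecomp : ∀ k, P (Tk X (m+1) k ∩ Ev X (m+1))
      = ∑' w : ℕ, P (Tk X (m+1) k ∩ Av X m w) := by
    intro k
    rw [EvUnion X m, Set.inter_iUnion]
    exact measure_iUnion
      (fun w1 w2 hne => ((Av_disj X m hne).mono Set.inter_subset_right Set.inter_subset_right))
      (fun w => (hTkMeas k).inter (hAvMeas w))
  have key : ∀ k w : ℕ, ENNReal.ofReal (gg c (k+1)) * P (Tk X (m+1) k ∩ Av X m w)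
      ≤ ENNReal.ofReal (tau c w k) * P (Av X m w) := by
    intro k w
    by_cases h : k+1 ≤ w
    · rw [TkSuccAv_true X m k w h]
      unfold tau
      rw [if_pos h]
    · rw [TkSuccAv_false X m k w h]
      have happ := htail (m+1) (k+2) (Av X m w) (hAvJ w)
      have hcast : Real.exp (-c * ((k+2 : ℕ) : ℝ)) = Real.exp (-(c * ((k:ℝ)+2))) := by
        congr 1; push_cast; ring
      calc ENNReal.ofReal (gg c (k+1)) * P ({ω | k+2 ≤ X (m+1) ω} ∩ Av X m w)
          ≤ ENNReal.ofReal (gg c (k+1))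
              * (ENNReal.ofReal (Real.exp (-c * ((k+2:ℕ):ℝ))) * P (Av X m w)) :=
            mul_le_mul_right happ _
        _ = ENNReal.ofReal (tau c w k) * P (Av X m w) := by
            rw [hcast, ← mul_assoc, ← ENNReal.ofReal_mul (gg_pos hc hc2 (k+1)).le]
            unfold tau
            rw [if_neg h]
  have hrinv : (0:ℝ) ≤ 1/rr c := by
    have := rr_one hc hc2
    positivity
  unfold Phi
  calc ∑' k : ℕ, ENNReal.ofReal (gg c (k+1)) * P (Tk X (m+1) k ∩ Ev X (m+1))
      = ∑' k : ℕ, ∑' w : ℕ, ENNReal.ofReal (gg c (k+1)) * P (Tk X (m+1) k ∩ Av X m w) := by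
        apply tsum_congr; intro k
        rw [hdecomp k, ← ENNReal.tsum_mul_left]
    _ ≤ ∑' k : ℕ, ∑' w : ℕ, ENNReal.ofReal (tau c w k) * P (Av X m w) :=
        ENNReal.tsum_le_tsum (fun k => ENNReal.tsum_le_tsum (fun w => key k w))
    _ = ∑' w : ℕ, ∑' k : ℕ, ENNReal.ofReal (tau c w k) * P (Av X m w) := ENNReal.tsum_comm
    _ = ∑' w : ℕ, (∑' k : ℕ, ENNReal.ofReal (tau c w k)) * P (Av X m w) :=
        tsum_congr (fun w => ENNReal.tsum_mul_right)
    _ = ∑' w : ℕ, ENNReal.ofReal (∑' k : ℕ, tau c w k) * P (Av X m w) := by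
        apply tsum_congr; intro w
        rw [ENNReal.ofReal_tsum_of_nonneg (fun k => tau_nonneg hc hc2 w k) (tau_summable hc hc2 w)]
    _ ≤ ∑' w : ℕ, ENNReal.ofReal ((1/rr c) * FF c (w+1)) * P (Av X m w) :=
        ENNReal.tsum_le_tsum (fun w =>
          mul_le_mul_left (ENNReal.ofReal_le_ofReal (tau_le hc hc2 w)) _)
    _ = ENNReal.ofReal (1/rr c) * ∑' w : ℕ, ENNReal.ofReal (FF c (w+1)) * P (Av X m w) := by
        rw [← ENNReal.tsum_mul_left]
        apply tsum_congr; intro w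
        rw [ENNReal.ofReal_mul hrinv, mul_assoc]
    _ = ENNReal.ofReal (1/rr c) * Phi c P X m := by
        rw [Phi_Av hc hc2 P X hXm m]

lemma Phi_base
    (htail : ∀ n k : ℕ, ∀ A : Set Ω,
      MeasurableSet[⨆ i ∈ Finset.range n, MeasurableSpace.comap (X i) ⊤] A →
      P ({ω | k ≤ X n ω} ∩ A) ≤ ENNReal.ofReal (Real.exp (-c * k)) * P A) :
    Phi c P X 0 ≤ ENNReal.ofReal (1 + 3 * et c / c) := by
  have hterm : ∀ k : ℕ, P (Tk X 0 k ∩ Ev X 0) ≤ ENNReal.ofReal (Real.exp (-c * ((k+2:ℕ):ℝ))) := by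
    intro k
    rw [Tk0Av X k, Ev0 X]
    have := htail 0 (k+2) Set.univ MeasurableSet.univ
    rwa [measure_univ, mul_one] at this
  calc Phi c P X 0
      ≤ ∑' k : ℕ, ENNReal.ofReal (gg c (k+1)) * ENNReal.ofReal (Real.exp (-c * ((k+2:ℕ):ℝ))) :=
        ENNReal.tsum_le_tsum (fun k => mul_le_mul_right (hterm k) _)
    _ = ∑' k : ℕ, ENNReal.ofReal (gg c (k+1) * Real.exp (-(c * ((k:ℝ)+2)))) := by
        apply tsum_congr; intro k
        rw [← ENNReal.ofReal_mul (gg_pos hc hc2 (k+1)).le]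
        congr 2
        push_cast
        ring
    _ = ENNReal.ofReal (∑' k : ℕ, gg c (k+1) * Real.exp (-(c * ((k:ℝ)+2)))) := by
        rw [ENNReal.ofReal_tsum_of_nonneg]
        · intro k
          exact mul_nonneg (gg_pos hc hc2 (k+1)).le (Real.exp_pos _).le
        · have h := summable_SSt hc hc2 0
          apply h.congr
          intro k
          norm_num
    _ ≤ ENNReal.ofReal (1 + 3 * et c / c) := by
        apply ENNReal.ofReal_le_ofReal
        rw [← SSt_zero hc hc2]
        exact base_le hc hc2

lemma Phi_bound
    (htail : ∀ n k : ℕ, ∀ A : Set Ω,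
      MeasurableSet[⨆ i ∈ Finset.range n, MeasurableSpace.comap (X i) ⊤] A →
      P ({ω | k ≤ X n ω} ∩ A) ≤ ENNReal.ofReal (Real.exp (-c * k)) * P A)
    (m : ℕ) :
    Phi c P X m ≤ ENNReal.ofReal ((1 + 3 * et c / c) * (1/rr c)^m) := by
  induction m with
  | zero =>
      simpa using Phi_base hc hc2 P X hXm htail
  | succ m ih =>
      have hrinv : (0:ℝ) ≤ 1/rr c := by
        have := rr_one hc hc2
        positivity
      calc Phi c P X (m+1) ≤ ENNReal.ofReal (1/rr c) * Phi c P X m :=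
            Phi_step hc hc2 P X hXm htail m
        _ ≤ ENNReal.ofReal (1/rr c) * ENNReal.ofReal ((1 + 3 * et c / c) * (1/rr c)^m) :=
            mul_le_mul_right ih _
        _ = ENNReal.ofReal ((1 + 3 * et c / c) * (1/rr c)^(m+1)) := by
            rw [← ENNReal.ofReal_mul hrinv]
            congr 1
            ring

lemma Ev_bound
    (htail : ∀ n k : ℕ, ∀ A : Set Ω,
      MeasurableSet[⨆ i ∈ Finset.range n, MeasurableSpace.comap (X i) ⊤] A →
      P ({ω | k ≤ X n ω} ∩ A) ≤ ENNReal.ofReal (Real.exp (-c * k)) * P A)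
    (m : ℕ) :
    P (Ev X (m+1)) ≤ ENNReal.ofReal ((1 + 3 * et c / c) * (1/rr c)^m / gg c 1) := by
  have hg1 : (0:ℝ) < gg c 1 := gg_pos hc hc2 1
  have h1 : ENNReal.ofReal (gg c 1) * P (Ev X (m+1)) ≤ Phi c P X m := by
    have hle := ENNReal.le_tsum (f := fun k : ℕ =>
      ENNReal.ofReal (gg c (k+1)) * P (Tk X m k ∩ Ev X m)) 0
    rw [EvSucc X m]
    simpa [Phi] using hle
  have h2 := le_trans h1 (Phi_bound hc hc2 P X hXm htail m)
  have hne0 : ENNReal.ofReal (gg c 1) ≠ 0 := by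
    simp [ENNReal.ofReal_eq_zero]
    linarith
  have hnetop : ENNReal.ofReal (gg c 1) ≠ ⊤ := ENNReal.ofReal_ne_top
  calc P (Ev X (m+1))
      = (ENNReal.ofReal (gg c 1))⁻¹ * (ENNReal.ofReal (gg c 1) * P (Ev X (m+1))) := by
        rw [← mul_assoc, ENNReal.inv_mul_cancel hne0 hnetop, one_mul]
    _ ≤ (ENNReal.ofReal (gg c 1))⁻¹ * ENNReal.ofReal ((1 + 3 * et c / c) * (1/rr c)^m) :=
        mul_le_mul_right h2 _
    _ = ENNReal.ofReal ((1 + 3 * et c / c) * (1/rr c)^m / gg c 1) := by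
        rw [← ENNReal.ofReal_inv_of_pos hg1, ← ENNReal.ofReal_mul (by positivity)]
        congr 1
        rw [div_eq_mul_inv]
        ring

end
end Geo
-- Part 10 : sum of R bound
namespace Geo
open MeasureTheory

variable {Ω : Type} [MeasurableSpace Ω]

def PS (R : ℕ → Ω → ℕ) (m : ℕ) (ω : Ω) : ℕ := ∑ j ∈ Finset.range m, R j ω

def As (R : ℕ → Ω → ℕ) (m t : ℕ) : Set Ω := {ω | PS R m ω = t}

def Ds (R : ℕ → Ω → ℕ) (m t s : ℕ) : Set Ω := As R m t ∩ {ω | t + R m ω = s}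

noncomputable def Gm (c : ℝ) (P : Measure Ω) (R : ℕ → Ω → ℕ) (m : ℕ) : ENNReal :=
  ∑' s : ℕ, ENNReal.ofReal ((bb c)^s) * P (As R m s)

lemma PS_succ (R : ℕ → Ω → ℕ) (m : ℕ) (ω : Ω) : PS R (m+1) ω = PS R m ω + R m ω :=
  Finset.sum_range_succ _ _

lemma meas_As (R : ℕ → Ω → ℕ) (m t : ℕ) {M : MeasurableSpace Ω}
    (hM : ∀ i, i < m → MeasurableSpace.comap (R i) ⊤ ≤ M) :
    MeasurableSet[M] (As R m t) := by
  have : As R m t = {ω | (fun x : ℕ → ℕ =>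
      (∑ j ∈ Finset.range m, x j) = t) (fun i => R i ω)} := by
    ext ω
    simp only [As, PS, Set.mem_setOf_eq]
  rw [this]
  exact meas_pre R hM (fun x : ℕ → ℕ => (∑ j ∈ Finset.range m, x j) = t) (by
    intro x y hxy h1
    rw [← h1]
    apply Finset.sum_congr rfl
    intro j hj
    exact (hxy j (by simpa using hj)).symm)

lemma As_disj (R : ℕ → Ω → ℕ) (m : ℕ) : Pairwise (Function.onFun Disjoint fun t => As R m t) := by
  intro t1 t2 hne
  simp only [Function.onFun]
  rw [Set.disjoint_left]
  intro ω h1 h2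
  simp only [As, Set.mem_setOf_eq] at h1 h2
  omega

section
variable {c : ℝ} (hc : 0 < c) (hc2 : c ≤ 1/2)
variable (P : Measure Ω) [IsProbabilityMeasure P] (R : ℕ → Ω → ℕ)
variable (hRm : ∀ n, Measurable (R n))
include hc hc2 hRm

lemma Gm_zero : Gm c P R 0 = 1 := by
  unfold Gm
  rw [tsum_eq_single 0]
  · have : As R 0 0 = Set.univ := by
      ext ω
      simp [As, PS]
    rw [this]
    simp
  · intro s hs
    have : As R 0 s = ∅ := by
      ext ω
      simp [As, PS]
      omega
    rw [this]
    simp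

lemma Gm_step
    (htail : ∀ n k : ℕ, ∀ A : Set Ω,
      MeasurableSet[⨆ i ∈ Finset.range n, MeasurableSpace.comap (R i) ⊤] A →
      P ({ω | k ≤ R n ω} ∩ A) ≤ ENNReal.ofReal (Real.exp (-c * k)) * P A)
    (m : ℕ) :
    Gm c P R (m+1) ≤ ENNReal.ofReal (7/3) * Gm c P R m := by
  have hbpos : (0:ℝ) < bb c := lt_trans one_pos (bb_one hc hc2)
  have hb1 : (1:ℝ) ≤ bb c := (bb_one hc hc2).le
  have hAsMeas : ∀ t, MeasurableSet (As R m t) :=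
    fun t => meas_As R m t (fun i _ => comap_le_ambient (R i) (hRm i))
  have hAsJ : ∀ t, MeasurableSet[⨆ i ∈ Finset.range m, MeasurableSpace.comap (R i) ⊤]
      (As R m t) := fun t => meas_As R m t (fun i hi => comap_le_J R hi)
  have hDsMeas : ∀ t s, MeasurableSet (Ds R m t s) := by
    intro t s
    apply (hAsMeas t).inter
    exact (hRm m) ((Set.to_countable {x : ℕ | t + x = s}).measurableSet)
  -- decomposition of the (m+1)-sum level sets
  have hAsSucc : ∀ s, As R (m+1) s = ⋃ t : ℕ, Ds R m t s := by
    intro s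
    ext ω
    simp only [As, Ds, Set.mem_iUnion, Set.mem_inter_iff, Set.mem_setOf_eq, PS_succ]
    constructor
    · intro h
      exact ⟨PS R m ω, ⟨rfl, h⟩⟩
    · rintro ⟨t, ⟨ht, hs⟩⟩
      omega
  have hdecomp : ∀ s, P (As R (m+1) s) = ∑' t : ℕ, P (Ds R m t s) := by
    intro s
    rw [hAsSucc s]
    exact measure_iUnion
      (fun t1 t2 hne => ((As_disj R m hne).mono Set.inter_subset_left Set.inter_subset_left))
      (fun t => hDsMeas t s)
  -- union over s of Ds t s is As t
  have hDsU : ∀ t, P (As R m t) = ∑' s : ℕ, P (Ds R m t s) := by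
    intro t
    have : As R m t = ⋃ s : ℕ, Ds R m t s := by
      ext ω
      simp only [Ds, Set.mem_iUnion, Set.mem_inter_iff, Set.mem_setOf_eq]
      constructor
      · intro h
        exact ⟨t + R m ω, ⟨h, rfl⟩⟩
      · rintro ⟨s, ⟨h, -⟩⟩
        exact h
    rw [this]
    apply measure_iUnion
    · intro s1 s2 hne
      simp only [Function.onFun]
      rw [Set.disjoint_left]
      rintro ω ⟨-, h1⟩ ⟨-, h2⟩
      simp only [Set.mem_setOf_eq] at h1 h2
      omega
    · exact fun s => hDsMeas t s
  -- the tail union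
  have hTailU : ∀ t u, P (As R m t ∩ {ω | u+1 ≤ R m ω})
      = ∑' s : ℕ, (if t+u+1 ≤ s then P (Ds R m t s) else 0) := by
    intro t u
    have huni : As R m t ∩ {ω | u+1 ≤ R m ω}
        = ⋃ s : ℕ, (if t+u+1 ≤ s then Ds R m t s else ∅) := by
      ext ω
      simp only [Set.mem_iUnion, Set.mem_inter_iff, Set.mem_setOf_eq]
      constructor
      · rintro ⟨hA, hR⟩
        refine ⟨t + R m ω, ?_⟩
        rw [if_pos (by omega)]
        exact ⟨hA, rfl⟩
      · rintro ⟨s, hs⟩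
        by_cases h : t+u+1 ≤ s
        · rw [if_pos h] at hs
          obtain ⟨hA, hval⟩ := hs
          simp only [Set.mem_setOf_eq] at hval
          exact ⟨hA, by omega⟩
        · rw [if_neg h] at hs
          exact absurd hs (Set.notMem_empty ω)
    rw [huni, measure_iUnion]
    · apply tsum_congr
      intro s
      by_cases h : t+u+1 ≤ s
      · rw [if_pos h, if_pos h]
      · rw [if_neg h, if_neg h, measure_empty]
    · intro s1 s2 hne
      simp only [Function.onFun]
      by_cases h1 : t+u+1 ≤ s1
      · by_cases h2 : t+u+1 ≤ s2
        · rw [if_pos h1, if_pos h2]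
          rw [Set.disjoint_left]
          rintro ω ⟨-, hx1⟩ ⟨-, hx2⟩
          simp only [Set.mem_setOf_eq] at hx1 hx2
          omega
        · rw [if_neg h2]; exact Set.disjoint_empty _
      · rw [if_neg h1]; exact Set.empty_disjoint _
    · intro s
      by_cases h : t+u+1 ≤ s
      · rw [if_pos h]; exact hDsMeas t s
      · rw [if_neg h]; exact MeasurableSet.empty
  -- pointwise expansion of b^s
  have eq1 : ∀ t s : ℕ, ENNReal.ofReal ((bb c)^s) * P (Ds R m t s)
      = ENNReal.ofReal ((bb c)^t) * P (Ds R m t s)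
        + ∑' u : ℕ, (if t+u+1 ≤ s then
            ENNReal.ofReal ((bb c)^t * ((bb c)^(u+1) - (bb c)^u)) else 0) * P (Ds R m t s) := by
    intro t s
    by_cases hts : t ≤ s
    · have hsum : ∑' u : ℕ, (if t+u+1 ≤ s then
          ENNReal.ofReal ((bb c)^t * ((bb c)^(u+1) - (bb c)^u)) else 0)
          = ∑ u ∈ Finset.range (s-t), ENNReal.ofReal ((bb c)^t * ((bb c)^(u+1) - (bb c)^u)) := by
        rw [tsum_eq_sum (s := Finset.range (s-t)) (by
          intro u hu
          rw [if_neg (by simp at hu; omega)])]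
        exact Finset.sum_congr rfl (fun u hu => by rw [if_pos (by simp at hu; omega)])
      have hreal : (bb c)^t + ∑ u ∈ Finset.range (s-t), (bb c)^t * ((bb c)^(u+1) - (bb c)^u)
          = (bb c)^s := by
        rw [← Finset.mul_sum, Finset.sum_range_sub (fun u => (bb c)^u)]
        rw [pow_zero]
        have : (bb c)^t * (bb c)^(s-t) = (bb c)^s := by
          rw [← pow_add]
          congr 1
          omega
        nlinarith [this]
      rw [ENNReal.tsum_mul_right, hsum, ← add_mul]
      congr 1
      rw [← ENNReal.ofReal_sum_of_nonneg (fun u _ => by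
        have : (bb c)^u ≤ (bb c)^(u+1) := pow_le_pow_right₀ hb1 (by omega)
        have hp : (0:ℝ) ≤ (bb c)^t := pow_nonneg hbpos.le t
        nlinarith)]
      rw [← ENNReal.ofReal_add (pow_nonneg hbpos.le t) (Finset.sum_nonneg (fun u _ => by
        have : (bb c)^u ≤ (bb c)^(u+1) := pow_le_pow_right₀ hb1 (by omega)
        have hp : (0:ℝ) ≤ (bb c)^t := pow_nonneg hbpos.le t
        nlinarith))]
      rw [hreal]
    · have : Ds R m t s = ∅ := by
        ext ω
        simp only [Ds, Set.mem_inter_iff, Set.mem_setOf_eq, Set.mem_empty_iff_false, iff_false,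
          not_and]
        intro _ h
        omega
      rw [this]
      simp
  -- per-t bound
  have per_t : ∀ t : ℕ, (∑' s : ℕ, ENNReal.ofReal ((bb c)^s) * P (Ds R m t s))
      ≤ ENNReal.ofReal (7/3) * (ENNReal.ofReal ((bb c)^t) * P (As R m t)) := by
    intro t
    calc (∑' s : ℕ, ENNReal.ofReal ((bb c)^s) * P (Ds R m t s))
        = (∑' s : ℕ, ENNReal.ofReal ((bb c)^t) * P (Ds R m t s))
          + ∑' s : ℕ, ∑' u : ℕ, (if t+u+1 ≤ s then
              ENNReal.ofReal ((bb c)^t * ((bb c)^(u+1) - (bb c)^u)) else 0) * P (Ds R m t s) := by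
          rw [← ENNReal.tsum_add]
          exact tsum_congr (fun s => eq1 t s)
      _ = ENNReal.ofReal ((bb c)^t) * P (As R m t)
          + ∑' u : ℕ, ENNReal.ofReal ((bb c)^t * ((bb c)^(u+1) - (bb c)^u))
              * P (As R m t ∩ {ω | u+1 ≤ R m ω}) := by
          congr 1
          · rw [ENNReal.tsum_mul_left, ← hDsU t]
          · rw [ENNReal.tsum_comm]
            apply tsum_congr
            intro u
            have hswap : ∀ s : ℕ, (if t+u+1 ≤ s then
                ENNReal.ofReal ((bb c)^t * ((bb c)^(u+1) - (bb c)^u)) else 0) * P (Ds R m t s)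
                = ENNReal.ofReal ((bb c)^t * ((bb c)^(u+1) - (bb c)^u))
                  * (if t+u+1 ≤ s then P (Ds R m t s) else 0) := by
              intro s
              by_cases h : t+u+1 ≤ s
              · rw [if_pos h, if_pos h]
              · rw [if_neg h, if_neg h, zero_mul, mul_zero]
            rw [tsum_congr hswap, ENNReal.tsum_mul_left, ← hTailU t u]
      _ ≤ ENNReal.ofReal ((bb c)^t) * P (As R m t)
          + ∑' u : ℕ, ENNReal.ofReal ((bb c)^t * ((bb c)^(u+1) - (bb c)^u))
              * (ENNReal.ofReal (Real.exp (-c * ((u+1:ℕ):ℝ))) * P (As R m t)) := by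
          apply add_le_add_right
          apply ENNReal.tsum_le_tsum
          intro u
          apply mul_le_mul_right
          have := htail m (u+1) (As R m t) (hAsJ t)
          calc P (As R m t ∩ {ω | u+1 ≤ R m ω})
              = P ({ω | u+1 ≤ R m ω} ∩ As R m t) := by rw [Set.inter_comm]
            _ ≤ ENNReal.ofReal (Real.exp (-c * ((u+1:ℕ):ℝ))) * P (As R m t) := this
      _ = (1 + ENNReal.ofReal (GB c)) * (ENNReal.ofReal ((bb c)^t) * P (As R m t)) := by
          have expand : ∀ u : ℕ, ENNReal.ofReal ((bb c)^t * ((bb c)^(u+1) - (bb c)^u))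
              * (ENNReal.ofReal (Real.exp (-c * ((u+1:ℕ):ℝ))) * P (As R m t))
              = ENNReal.ofReal (((bb c)^(u+1) - (bb c)^u) * Real.exp (-(c * ((u:ℝ)+1))))
                * (ENNReal.ofReal ((bb c)^t) * P (As R m t)) := by
            intro u
            have h1 : (0:ℝ) ≤ (bb c)^t := pow_nonneg hbpos.le t
            have h2 : (0:ℝ) ≤ (bb c)^(u+1) - (bb c)^u := by
              have : (bb c)^u ≤ (bb c)^(u+1) := pow_le_pow_right₀ hb1 (by omega)
              linarith
            have hcast : Real.exp (-c * ((u+1:ℕ):ℝ)) = Real.exp (-(c * ((u:ℝ)+1))) := by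
              congr 1; push_cast; ring
            rw [hcast, ENNReal.ofReal_mul h1, ENNReal.ofReal_mul h2]
            ring
          rw [tsum_congr expand, ENNReal.tsum_mul_right]
          have hGB : (∑' u : ℕ, ENNReal.ofReal (((bb c)^(u+1) - (bb c)^u)
              * Real.exp (-(c * ((u:ℝ)+1))))) = ENNReal.ofReal (GB c) := by
            rw [← ENNReal.ofReal_tsum_of_nonneg]
            · unfold GB
              congr 1
            · intro u
              have h2 : (0:ℝ) ≤ (bb c)^(u+1) - (bb c)^u := by
                have : (bb c)^u ≤ (bb c)^(u+1) := pow_le_pow_right₀ hb1 (by omega)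
                linarith
              exact mul_nonneg h2 (Real.exp_pos _).le
            · exact summable_GB hc hc2
          rw [hGB]
          ring
      _ ≤ ENNReal.ofReal (7/3) * (ENNReal.ofReal ((bb c)^t) * P (As R m t)) := by
          apply mul_le_mul_left
          have : (1:ENNReal) + ENNReal.ofReal (GB c) = ENNReal.ofReal (1 + GB c) := by
            rw [ENNReal.ofReal_add (by norm_num) (GB_nonneg hc hc2)]
            simp
          rw [this]
          apply ENNReal.ofReal_le_ofReal
          have := GB_le hc hc2
          linarith
  -- assemble
  unfold Gm
  calc ∑' s : ℕ, ENNReal.ofReal ((bb c)^s) * P (As R (m+1) s)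
      = ∑' s : ℕ, ∑' t : ℕ, ENNReal.ofReal ((bb c)^s) * P (Ds R m t s) := by
        apply tsum_congr
        intro s
        rw [hdecomp s, ENNReal.tsum_mul_left]
    _ = ∑' t : ℕ, ∑' s : ℕ, ENNReal.ofReal ((bb c)^s) * P (Ds R m t s) := ENNReal.tsum_comm
    _ ≤ ∑' t : ℕ, ENNReal.ofReal (7/3) * (ENNReal.ofReal ((bb c)^t) * P (As R m t)) :=
        ENNReal.tsum_le_tsum per_t
    _ = ENNReal.ofReal (7/3) * ∑' t : ℕ, ENNReal.ofReal ((bb c)^t) * P (As R m t) :=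
        ENNReal.tsum_mul_left
    _ = ENNReal.ofReal (7/3) * Gm c P R m := rfl

lemma Gm_bound
    (htail : ∀ n k : ℕ, ∀ A : Set Ω,
      MeasurableSet[⨆ i ∈ Finset.range n, MeasurableSpace.comap (R i) ⊤] A →
      P ({ω | k ≤ R n ω} ∩ A) ≤ ENNReal.ofReal (Real.exp (-c * k)) * P A)
    (m : ℕ) : Gm c P R m ≤ ENNReal.ofReal ((7/3)^m) := by
  induction m with
  | zero =>
      rw [Gm_zero hc hc2 P R hRm]
      simp
  | succ m ih =>
      calc Gm c P R (m+1) ≤ ENNReal.ofReal (7/3) * Gm c P R m := Gm_step hc hc2 P R hRm htail m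
        _ ≤ ENNReal.ofReal (7/3) * ENNReal.ofReal ((7/3)^m) := mul_le_mul_right ih _
        _ = ENNReal.ofReal ((7/3)^(m+1)) := by
            rw [← ENNReal.ofReal_mul (by norm_num)]
            congr 1
            ring

lemma PS_tail
    (htail : ∀ n k : ℕ, ∀ A : Set Ω,
      MeasurableSet[⨆ i ∈ Finset.range n, MeasurableSpace.comap (R i) ⊤] A →
      P ({ω | k ≤ R n ω} ∩ A) ≤ ENNReal.ofReal (Real.exp (-c * k)) * P A)
    (m k : ℕ) :
    P {ω | k ≤ PS R m ω} ≤ ENNReal.ofReal ((7/3)^m * (Real.exp (-(c/2)))^k) := by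
  have hbpos : (0:ℝ) < bb c := lt_trans one_pos (bb_one hc hc2)
  have hb1 : (1:ℝ) ≤ bb c := (bb_one hc hc2).le
  have hbk : (0:ℝ) < (bb c)^k := pow_pos hbpos k
  have hAsMeas : ∀ t, MeasurableSet (As R m t) :=
    fun t => meas_As R m t (fun i _ => comap_le_ambient (R i) (hRm i))
  have hU : P {ω | k ≤ PS R m ω} = ∑' s : ℕ, (if k ≤ s then P (As R m s) else 0) := by
    have : {ω | k ≤ PS R m ω} = ⋃ s : ℕ, (if k ≤ s then As R m s else ∅) := by
      ext ω
      simp only [Set.mem_iUnion, Set.mem_setOf_eq]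
      constructor
      · intro h
        refine ⟨PS R m ω, ?_⟩
        rw [if_pos h]
        exact rfl
      · rintro ⟨s, hs⟩
        by_cases h : k ≤ s
        · rw [if_pos h] at hs
          simp only [As, Set.mem_setOf_eq] at hs
          omega
        · rw [if_neg h] at hs
          exact absurd hs (Set.notMem_empty ω)
    rw [this, measure_iUnion]
    · apply tsum_congr
      intro s
      by_cases h : k ≤ s
      · rw [if_pos h, if_pos h]
      · rw [if_neg h, if_neg h, measure_empty]
    · intro s1 s2 hne
      simp only [Function.onFun]
      by_cases h1 : k ≤ s1
      · by_cases h2 : k ≤ s2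
        · rw [if_pos h1, if_pos h2]
          exact As_disj R m hne
        · rw [if_neg h2]; exact Set.disjoint_empty _
      · rw [if_neg h1]; exact Set.empty_disjoint _
    · intro s
      by_cases h : k ≤ s
      · rw [if_pos h]; exact hAsMeas s
      · rw [if_neg h]; exact MeasurableSet.empty
  have hMarkov : ENNReal.ofReal ((bb c)^k) * P {ω | k ≤ PS R m ω} ≤ Gm c P R m := by
    rw [hU, ← ENNReal.tsum_mul_left]
    unfold Gm
    apply ENNReal.tsum_le_tsum
    intro s
    by_cases h : k ≤ s
    · rw [if_pos h]
      apply mul_le_mul_left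
      exact ENNReal.ofReal_le_ofReal (pow_le_pow_right₀ hb1 h)
    · rw [if_neg h, mul_zero]
      exact zero_le
  have h2 := le_trans hMarkov (Gm_bound hc hc2 P R hRm htail m)
  have hne0 : ENNReal.ofReal ((bb c)^k) ≠ 0 := by
    simp [ENNReal.ofReal_eq_zero]
    linarith
  have hnetop : ENNReal.ofReal ((bb c)^k) ≠ ⊤ := ENNReal.ofReal_ne_top
  have hEinv : ((bb c)^k)⁻¹ = (Real.exp (-(c/2)))^k := by
    rw [← inv_pow]
    congr 1
    unfold bb
    rw [← Real.exp_neg]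
  calc P {ω | k ≤ PS R m ω}
      = (ENNReal.ofReal ((bb c)^k))⁻¹ * (ENNReal.ofReal ((bb c)^k) * P {ω | k ≤ PS R m ω}) := by
        rw [← mul_assoc, ENNReal.inv_mul_cancel hne0 hnetop, one_mul]
    _ ≤ (ENNReal.ofReal ((bb c)^k))⁻¹ * ENNReal.ofReal ((7/3)^m) := mul_le_mul_right h2 _
    _ = ENNReal.ofReal ((7/3)^m * (Real.exp (-(c/2)))^k) := by
        rw [← ENNReal.ofReal_inv_of_pos hbk, ← ENNReal.ofReal_mul (by positivity)]
        rw [hEinv]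
        congr 1
        ring

end
end Geo
-- Part 11 : translation of the stopping set
namespace Geo
open MeasureTheory

variable {Ω : Type} [MeasurableSpace Ω]

lemma Sdef (X : ℕ → Ω → ℕ) (ω : Ω) (i : ℕ) (hi : 1 ≤ i) :
    (∀ n, ¬(n < i ∧ i < n + X n ω)) ↔ reach X (i-1) ω ≤ i := by
  constructor
  · intro h
    apply Finset.sup_le
    intro n hn
    simp only [Finset.mem_range] at hn
    have := h n
    omega
  · intro h n
    intro ⟨hn1, hn2⟩
    have hmem : n ∈ Finset.range ((i-1)+1) := Finset.mem_range.2 (by omega)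
    have hsup := Finset.le_sup (f := fun n => n + X n ω) hmem
    change n + X n ω ≤ reach X (i-1) ω at hsup
    omega

lemma notEv_bound {X : ℕ → Ω → ℕ} {ω : Ω} {m : ℕ} (h : ω ∉ Ev X m) :
    ∃ i, (1 ≤ i ∧ ∀ n, ¬(n < i ∧ i < n + X n ω)) ∧ i ≤ m := by
  simp only [Ev, Set.mem_setOf_eq, not_forall] at h
  obtain ⟨i, hi, hreach⟩ := h
  refine ⟨i+1, ⟨⟨by omega, ?_⟩, by omega⟩⟩
  rw [Sdef X ω (i+1) (by omega)]
  simp only [Nat.add_sub_cancel]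
  omega

lemma Zsub (X R : ℕ → Ω → ℕ) (m k : ℕ) :
    {ω | k ≤ ∑ j ∈ Finset.range
        (sInf {i | 1 ≤ i ∧ ∀ n, ¬(n < i ∧ i < n + X n ω)}), R j ω}
      ⊆ Ev X m ∪ {ω | k ≤ PS R m ω} := by
  intro ω hω
  by_cases hEv : ω ∈ Ev X m
  · exact Or.inl hEv
  · right
    obtain ⟨i, hiS, him⟩ := notEv_bound hEv
    have hle : sInf {i | 1 ≤ i ∧ ∀ n, ¬(n < i ∧ i < n + X n ω)} ≤ i := Nat.sInf_le hiS
    simp only [Set.mem_setOf_eq] at hω ⊢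
    calc k ≤ ∑ j ∈ Finset.range
          (sInf {i | 1 ≤ i ∧ ∀ n, ¬(n < i ∧ i < n + X n ω)}), R j ω := hω
      _ ≤ PS R m ω := Finset.sum_le_sum_of_subset (Finset.range_subset_range.2 (by omega))

lemma Zone (X R : ℕ → Ω → ℕ) (ω : Ω) (hXR : X 0 ω ≤ R 0 ω)
    (hZ : 1 ≤ ∑ j ∈ Finset.range
        (sInf {i | 1 ≤ i ∧ ∀ n, ¬(n < i ∧ i < n + X n ω)}), R j ω) :
    1 ≤ R 0 ω := by
  by_contra hR
  have hR0 : R 0 ω = 0 := by omega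
  have hX0 : X 0 ω = 0 := by omega
  have h1 : 1 ∈ {i | 1 ≤ i ∧ ∀ n, ¬(n < i ∧ i < n + X n ω)} := by
    refine ⟨le_refl 1, ?_⟩
    intro n
    intro ⟨hn1, hn2⟩
    interval_cases n
    omega
  have hinf_le : sInf {i | 1 ≤ i ∧ ∀ n, ¬(n < i ∧ i < n + X n ω)} ≤ 1 := Nat.sInf_le h1
  have hinf_mem := Nat.sInf_mem (Set.nonempty_of_mem h1)
  have hinf_ge : 1 ≤ sInf {i | 1 ≤ i ∧ ∀ n, ¬(n < i ∧ i < n + X n ω)} := hinf_mem.1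
  have heq : sInf {i | 1 ≤ i ∧ ∀ n, ¬(n < i ∧ i < n + X n ω)} = 1 := le_antisymm hinf_le hinf_ge
  rw [heq] at hZ
  simp at hZ
  omega

end Geo
-- Part 12 : main theorem
open Geo MeasureTheory ProbabilityTheory Filter Set Real

set_option maxHeartbeats 1000000 in
theorem geometric_sum_exponential_tail :
    ∀ c : ℝ, 0 < c → ∃ chat : ℝ, 0 < chat ∧
      ∀ (Ω : Type) [MeasurableSpace Ω] (P : Measure Ω), IsProbabilityMeasure P →
        ∀ X R : ℕ → Ω → ℕ,
          (∀ n, Measurable (X n)) → (∀ n, Measurable (R n)) →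
          (∀ n, ∀ᵐ ω ∂P, X n ω ≤ R n ω) →
          (∀ n k : ℕ, ∀ A : Set Ω,
            MeasurableSet[⨆ i ∈ Finset.range n, MeasurableSpace.comap (X i) ⊤] A →
            P ({ω | k ≤ X n ω} ∩ A) ≤ ENNReal.ofReal (Real.exp (-c * k)) * P A) →
          (∀ n : ℕ, ∀ A : Set Ω,
            MeasurableSet[⨆ i ∈ Finset.range n, MeasurableSpace.comap (X i) ⊤] A →
            ENNReal.ofReal c * P A ≤ P ({ω | X n ω ≤ 1} ∩ A)) →
          (∀ n k : ℕ, ∀ A : Set Ω,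
            MeasurableSet[⨆ i ∈ Finset.range n, MeasurableSpace.comap (R i) ⊤] A →
            P ({ω | k ≤ R n ω} ∩ A) ≤ ENNReal.ofReal (Real.exp (-c * k)) * P A) →
          ∀ k : ℕ,
            P {ω | k ≤ ∑ j ∈ Finset.range
                (sInf {i | 1 ≤ i ∧ ∀ n, ¬(n < i ∧ i < n + X n ω)}), R j ω}
              ≤ ENNReal.ofReal (Real.exp (-chat * k)) := by
  intro c hc0
  obtain ⟨c', hc'def⟩ : ∃ y : ℝ, y = min c (1/2) := ⟨_, rfl⟩
  have hc' : 0 < c' := by rw [hc'def]; exact lt_min hc0 (by norm_num)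
  have hc'2 : c' ≤ 1/2 := by rw [hc'def]; exact min_le_right _ _
  have hc'le : c' ≤ c := by rw [hc'def]; exact min_le_left _ _
  obtain ⟨L, hLdef⟩ : ∃ y : ℝ, y = Real.log (7/3) := ⟨_, rfl⟩
  have hLpos : (0:ℝ) < L := by rw [hLdef]; exact Real.log_pos (by norm_num)
  obtain ⟨ε, hεdef⟩ : ∃ y : ℝ, y = c'/(4*L) := ⟨_, rfl⟩
  have hεpos : 0 < ε := by rw [hεdef]; positivity
  have hrr1 : 1 < rr c' := rr_one hc' hc'2
  have hrrpos : (0:ℝ) < rr c' := lt_trans one_pos hrr1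
  obtain ⟨αA, hαAdef⟩ : ∃ y : ℝ, y = ε * Real.log (rr c') := ⟨_, rfl⟩
  have hαApos : 0 < αA := by rw [hαAdef]; exact mul_pos hεpos (Real.log_pos hrr1)
  have hetpos := et_pos hc' hc'2
  have hg1pos : (0:ℝ) < gg c' 1 := gg_pos hc' hc'2 1
  obtain ⟨CA, hCAdef⟩ : ∃ y : ℝ, y = (1 + 3 * et c' / c') / gg c' 1 := ⟨_, rfl⟩
  have hCApos : 0 < CA := by
    rw [hCAdef]
    apply div_pos _ hg1pos
    positivity
  obtain ⟨C3, hC3def⟩ : ∃ y : ℝ, y = CA * rr c' + 7/3 := ⟨_, rfl⟩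
  have hC3pos : (0:ℝ) < C3 := by rw [hC3def]; positivity
  obtain ⟨α, hαdef⟩ : ∃ y : ℝ, y = min αA (c'/4) := ⟨_, rfl⟩
  have hαpos : 0 < α := by rw [hαdef]; exact lt_min hαApos (by positivity)
  have hα1 : α ≤ αA := by rw [hαdef]; exact min_le_left _ _
  have hα2 : α ≤ c'/4 := by rw [hαdef]; exact min_le_right _ _
  obtain ⟨K0, hK0def⟩ : ∃ y : ℕ, y = max 1 (Nat.ceil (Real.log C3 * (2/α))) := ⟨_, rfl⟩
  have hK0ge : (1:ℕ) ≤ K0 := by rw [hK0def]; exact le_max_left _ _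
  have hK0pos : (0:ℝ) < (K0:ℝ) := by exact_mod_cast hK0ge
  obtain ⟨chat, hchatdef⟩ : ∃ y : ℝ, y = min (α/2) (c'/(K0:ℝ)) := ⟨_, rfl⟩
  have hchatpos : 0 < chat := by
    rw [hchatdef]; exact lt_min (by positivity) (by positivity)
  have hchat1 : chat ≤ α/2 := by rw [hchatdef]; exact min_le_left _ _
  have hchat2 : chat ≤ c'/(K0:ℝ) := by rw [hchatdef]; exact min_le_right _ _
  refine ⟨chat, hchatpos, ?_⟩
  intro Ω instΩ P hP X R hXm hRm hXR htX hbX htR k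
  have htX' : ∀ n k : ℕ, ∀ A : Set Ω,
      MeasurableSet[⨆ i ∈ Finset.range n, MeasurableSpace.comap (X i) ⊤] A →
      P ({ω | k ≤ X n ω} ∩ A) ≤ ENNReal.ofReal (Real.exp (-c' * k)) * P A := by
    intro n k A hA
    refine le_trans (htX n k A hA) (mul_le_mul_left (ENNReal.ofReal_le_ofReal
      (Real.exp_le_exp.2 ?_)) _)
    have hk : (0:ℝ) ≤ (k:ℝ) := Nat.cast_nonneg k
    nlinarith
  have htR' : ∀ n k : ℕ, ∀ A : Set Ω,
      MeasurableSet[⨆ i ∈ Finset.range n, MeasurableSpace.comap (R i) ⊤] A →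
      P ({ω | k ≤ R n ω} ∩ A) ≤ ENNReal.ofReal (Real.exp (-c' * k)) * P A := by
    intro n k A hA
    refine le_trans (htR n k A hA) (mul_le_mul_left (ENNReal.ofReal_le_ofReal
      (Real.exp_le_exp.2 ?_)) _)
    have hk : (0:ℝ) ≤ (k:ℝ) := Nat.cast_nonneg k
    nlinarith
  rcases Nat.eq_zero_or_pos k with rfl | hk1
  · simp only [Nat.cast_zero, mul_zero, Real.exp_zero, ENNReal.ofReal_one]
    exact prob_le_one
  by_cases hkK : k ≤ K0
  · -- small k regime
    have hsub : {ω | k ≤ ∑ j ∈ Finset.range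
          (sInf {i | 1 ≤ i ∧ ∀ n, ¬(n < i ∧ i < n + X n ω)}), R j ω}
        ⊆ {ω | 1 ≤ R 0 ω} ∪ {ω | ¬ X 0 ω ≤ R 0 ω} := by
      intro ω hω
      by_cases hxr : X 0 ω ≤ R 0 ω
      · exact Or.inl (Zone X R ω hxr (le_trans hk1 hω))
      · exact Or.inr hxr
    have hnull : P {ω | ¬ X 0 ω ≤ R 0 ω} = 0 := by
      have h := hXR 0
      rw [ae_iff] at h
      exact h
    have h1 : P {ω | k ≤ ∑ j ∈ Finset.range
          (sInf {i | 1 ≤ i ∧ ∀ n, ¬(n < i ∧ i < n + X n ω)}), R j ω}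
        ≤ P {ω | 1 ≤ R 0 ω} := by
      calc P _ ≤ P ({ω | 1 ≤ R 0 ω} ∪ {ω | ¬ X 0 ω ≤ R 0 ω}) := measure_mono hsub
        _ ≤ P {ω | 1 ≤ R 0 ω} + P {ω | ¬ X 0 ω ≤ R 0 ω} := measure_union_le _ _
        _ = P {ω | 1 ≤ R 0 ω} := by rw [hnull, add_zero]
    have h2 : P {ω | 1 ≤ R 0 ω} ≤ ENNReal.ofReal (Real.exp (-c' * ((1:ℕ):ℝ))) := by
      have h := htR' 0 1 Set.univ MeasurableSet.univ
      rwa [Set.inter_univ, measure_univ, mul_one] at h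
    refine le_trans h1 (le_trans h2 (ENNReal.ofReal_le_ofReal (Real.exp_le_exp.2 ?_)))
    have hkle : (k:ℝ) ≤ (K0:ℝ) := by exact_mod_cast hkK
    have hkposR : (0:ℝ) < (k:ℝ) := by exact_mod_cast hk1
    have hstep : chat * k ≤ (c'/(K0:ℝ)) * (K0:ℝ) :=
      mul_le_mul hchat2 hkle hkposR.le (by positivity)
    rw [div_mul_cancel₀ c' (ne_of_gt hK0pos)] at hstep
    simp only [Nat.cast_one, mul_one]
    linarith
  · -- large k regime
    push_neg at hkK
    have hEv := Ev_bound hc' hc'2 P X hXm htX' (Nat.floor (ε * k))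
    have hPS := PS_tail hc' hc'2 P R hRm htR' (Nat.floor (ε * k) + 1) k
    have hsplit : P {ω | k ≤ ∑ j ∈ Finset.range
          (sInf {i | 1 ≤ i ∧ ∀ n, ¬(n < i ∧ i < n + X n ω)}), R j ω}
        ≤ P (Ev X (Nat.floor (ε * k)+1)) + P {ω | k ≤ PS R (Nat.floor (ε * k)+1) ω} :=
      le_trans (measure_mono (Zsub X R (Nat.floor (ε * k)+1) k)) (measure_union_le _ _)
    have hkposR : (0:ℝ) < (k:ℝ) := by exact_mod_cast hk1
    have hq0 : (0:ℝ) < 1/rr c' := by positivity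
    have hq1 : 1/rr c' ≤ 1 := by
      rw [div_le_one hrrpos]; linarith
    have hmk_lb : ε * k - 1 ≤ ((Nat.floor (ε * k)):ℝ) := by
      have := Nat.lt_floor_add_one (ε * (k:ℝ))
      linarith
    have hb1 : (1 + 3 * et c' / c') * (1/rr c')^(Nat.floor (ε * k)) / gg c' 1
        ≤ CA * rr c' * Real.exp (-(αA*k)) := by
      have e0 : (1 + 3 * et c' / c') * (1/rr c')^(Nat.floor (ε * k)) / gg c' 1
          = CA * (1/rr c')^(Nat.floor (ε * k)) := by
        rw [hCAdef]; ring
      rw [e0]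
      have e1 : (1/rr c')^(Nat.floor (ε * k)) ≤ rr c' * Real.exp (-(αA*k)) := by
        have r1 : (1/rr c')^(Nat.floor (ε * k)) = (1/rr c')^(((Nat.floor (ε * k)):ℝ)) := by
          rw [Real.rpow_natCast]
        have r2 : (1/rr c')^(((Nat.floor (ε * k)):ℝ)) ≤ (1/rr c')^(ε*k - 1) :=
          Real.rpow_le_rpow_of_exponent_ge hq0 hq1 hmk_lb
        have r3 : (1/rr c')^(ε*(k:ℝ)-1) = Real.exp ((ε*k-1) * Real.log (1/rr c')) := by
          rw [Real.rpow_def_of_pos hq0]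
          ring_nf
        have r4 : Real.log (1/rr c') = -Real.log (rr c') := by
          rw [one_div, Real.log_inv]
        have r5 : Real.exp ((ε*(k:ℝ)-1) * Real.log (1/rr c')) = rr c' * Real.exp (-(αA*k)) := by
          rw [r4, hαAdef]
          rw [show (ε*(k:ℝ)-1) * -Real.log (rr c')
            = Real.log (rr c') + -(ε * Real.log (rr c') * k) by ring]
          rw [Real.exp_add, Real.exp_log hrrpos]
        rw [r1]
        rw [r3, r5] at r2
        exact r2
      calc CA * (1/rr c')^(Nat.floor (ε * k)) ≤ CA * (rr c' * Real.exp (-(αA*k))) :=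
            mul_le_mul_of_nonneg_left e1 hCApos.le
        _ = CA * rr c' * Real.exp (-(αA*k)) := by ring
    have hb2 : (7/3:ℝ)^(Nat.floor (ε * k)+1) * (Real.exp (-(c'/2)))^k
        ≤ (7/3) * Real.exp (-(c'/4*k)) := by
      have hmk_ub : (((Nat.floor (ε * k)+1:ℕ)):ℝ) ≤ ε*k + 1 := by
        have := Nat.floor_le (by positivity : (0:ℝ) ≤ ε * (k:ℝ))
        push_cast
        linarith
      have r1 : (7/3:ℝ)^(Nat.floor (ε * k)+1)
          = (7/3:ℝ)^((((Nat.floor (ε * k)+1:ℕ))):ℝ) := by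
        rw [Real.rpow_natCast]
      have r2 : (7/3:ℝ)^((((Nat.floor (ε * k)+1:ℕ))):ℝ) ≤ (7/3:ℝ)^(ε*(k:ℝ)+1) :=
        Real.rpow_le_rpow_of_exponent_le (by norm_num) hmk_ub
      have r3 : (7/3:ℝ)^(ε*(k:ℝ)+1) = (7/3) * Real.exp (c'/4 * k) := by
        rw [Real.rpow_def_of_pos (by norm_num)]
        rw [show Real.log (7/3) * (ε*(k:ℝ)+1) = L + (ε*L) * k by rw [hLdef]; ring]
        have hεL : ε * L = c'/4 := by
          rw [hεdef]
          field_simp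
        rw [hεL, Real.exp_add, hLdef, Real.exp_log (by norm_num : (0:ℝ) < 7/3)]
      have r4 : (Real.exp (-(c'/2)))^k = Real.exp (-(c'/2) * k) := by
        rw [← Real.exp_nat_mul]
        congr 1
        ring
      have hE : (0:ℝ) ≤ (Real.exp (-(c'/2)))^k := pow_nonneg (Real.exp_pos _).le k
      calc (7/3:ℝ)^(Nat.floor (ε * k)+1) * (Real.exp (-(c'/2)))^k
          ≤ ((7/3) * Real.exp (c'/4 * k)) * (Real.exp (-(c'/2)))^k := by
            apply mul_le_mul_of_nonneg_right _ hE
            rw [r1]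
            rw [r3] at r2
            exact r2
        _ = (7/3) * Real.exp (-(c'/4*k)) := by
            rw [r4, mul_assoc, ← Real.exp_add]
            congr 2
            ring
    have hc3 : CA * rr c' * Real.exp (-(αA*k)) + (7/3) * Real.exp (-(c'/4*k))
        ≤ C3 * Real.exp (-(α*k)) := by
      have m1 : Real.exp (-(αA*k)) ≤ Real.exp (-(α*k)) := by
        apply Real.exp_le_exp.2
        have := mul_le_mul_of_nonneg_right hα1 hkposR.le
        linarith
      have m2 : Real.exp (-(c'/4*k)) ≤ Real.exp (-(α*k)) := by
        apply Real.exp_le_exp.2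
        have := mul_le_mul_of_nonneg_right hα2 hkposR.le
        linarith
      calc CA * rr c' * Real.exp (-(αA*k)) + (7/3) * Real.exp (-(c'/4*k))
          ≤ CA * rr c' * Real.exp (-(α*k)) + (7/3) * Real.exp (-(α*k)) :=
            add_le_add (mul_le_mul_of_nonneg_left m1 (by positivity))
              (mul_le_mul_of_nonneg_left m2 (by norm_num))
        _ = C3 * Real.exp (-(α*k)) := by rw [hC3def]; ring
    have hfinal : C3 * Real.exp (-(α*k)) ≤ Real.exp (-chat*k) := by
      have hK0le : Real.log C3 * (2/α) ≤ (K0:ℝ) := by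
        have h1 : Real.log C3 * (2/α) ≤ (Nat.ceil (Real.log C3 * (2/α)):ℝ) := Nat.le_ceil _
        have h2 : ((Nat.ceil (Real.log C3 * (2/α)):ℕ):ℝ) ≤ (K0:ℝ) := by
          have : Nat.ceil (Real.log C3 * (2/α)) ≤ K0 := by
            rw [hK0def]; exact le_max_right _ _
          exact_mod_cast this
        linarith
      have hkK' : (K0:ℝ) + 1 ≤ (k:ℝ) := by exact_mod_cast hkK
      have hlog : Real.log C3 ≤ (α/2) * k := by
        have h3 : Real.log C3 * (2/α) ≤ (k:ℝ) := by linarith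
        calc Real.log C3 = (Real.log C3 * (2/α)) * (α/2) := by
              field_simp
          _ ≤ (k:ℝ) * (α/2) := mul_le_mul_of_nonneg_right h3 (by positivity)
          _ = (α/2) * k := by ring
      have hC3e : C3 ≤ Real.exp ((α/2) * k) := by
        rw [← Real.exp_log hC3pos]
        exact Real.exp_le_exp.2 hlog
      calc C3 * Real.exp (-(α*k)) ≤ Real.exp ((α/2)*k) * Real.exp (-(α*k)) :=
            mul_le_mul_of_nonneg_right hC3e (Real.exp_pos _).le
        _ = Real.exp (-(α/2 * k)) := by rw [← Real.exp_add]; congr 1; ring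
        _ ≤ Real.exp (-chat*k) := by
            apply Real.exp_le_exp.2
            have := mul_le_mul_of_nonneg_right hchat1 hkposR.le
            linarith
    calc P {ω | k ≤ ∑ j ∈ Finset.range
          (sInf {i | 1 ≤ i ∧ ∀ n, ¬(n < i ∧ i < n + X n ω)}), R j ω}
        ≤ P (Ev X (Nat.floor (ε * k)+1)) + P {ω | k ≤ PS R (Nat.floor (ε * k)+1) ω} := hsplit
      _ ≤ ENNReal.ofReal ((1 + 3 * et c' / c') * (1/rr c')^(Nat.floor (ε * k)) / gg c' 1)
          + ENNReal.ofReal ((7/3)^(Nat.floor (ε * k)+1) * (Real.exp (-(c'/2)))^k) :=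
          add_le_add hEv hPS
      _ ≤ ENNReal.ofReal (CA * rr c' * Real.exp (-(αA*k)))
          + ENNReal.ofReal ((7/3) * Real.exp (-(c'/4*k))) :=
          add_le_add (ENNReal.ofReal_le_ofReal hb1) (ENNReal.ofReal_le_ofReal hb2)
      _ = ENNReal.ofReal (CA * rr c' * Real.exp (-(αA*k)) + (7/3) * Real.exp (-(c'/4*k))) := by
          rw [ENNReal.ofReal_add (by positivity) (by positivity)]
      _ ≤ ENNReal.ofReal (Real.exp (-chat*k)) :=
          ENNReal.ofReal_le_ofReal (le_trans hc3 hfinal)
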